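/- arXiv:2301.01781 — 8 statements merged into one kernel-verified Lean document; each statement's English description precedes it below -/
import Mathlib

section
/- Let N : M_d(ℂ) → M_d(ℂ) be a channel with Kraus operators {K_i}. Then the maximum entanglement fidelity O(N) — the supremum over all density matrices ρ on ℂ^d ⊗ ℂ^d of ⟨φ, ((id⊗N)(ρ)) φ⟩ — equals (1/d) times the largest eigenvalue of the Choi matrix J^N, which (since J^N is positive semidefinite) equals (1/d)·‖J^N‖, where ‖·‖ is the spectral (operator) norm. Moreover this supremum is attained. -/
open Matrix
open scoped Kronecker ComplexOrder

/-- The maximally entangled unit vector `φ = (1/√d) Σ_a e_a ⊗ e_a`. -/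
noncomputable def maxEnt (n : Type*) [Fintype n] [DecidableEq n] : n × n → ℂ :=
  fun p => if p.1 = p.2 then ((1 / Real.sqrt (Fintype.card n) : ℝ) : ℂ) else 0

/-- The output `(id ⊗ N)(ρ) = Σ_i (I ⊗ K_i) ρ (I ⊗ K_i)†` of one half of `ρ`
through the channel with Kraus operators `K`. -/
noncomputable def chanOut {n : Type*} [Fintype n] [DecidableEq n] {ι : Type*} [Fintype ι]
    (K : ι → Matrix n n ℂ) (ρ : Matrix (n × n) (n × n) ℂ) : Matrix (n × n) (n × n) ℂ :=
  ∑ i, ((1 : Matrix n n ℂ) ⊗ₖ K i) * ρ * ((1 : Matrix n n ℂ) ⊗ₖ K i)ᴴ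

/-- The entanglement fidelity `⟨φ, ((id⊗N)(ρ)) φ⟩`. -/
noncomputable def fid {n : Type*} [Fintype n] [DecidableEq n] {ι : Type*} [Fintype ι]
    (K : ι → Matrix n n ℂ) (ρ : Matrix (n × n) (n × n) ℂ) : ℂ :=
  star (maxEnt n) ⬝ᵥ (chanOut K ρ *ᵥ maxEnt n)

/-- A density matrix: positive semidefinite with unit trace. -/
def IsDensity {m : Type*} [Fintype m] (ρ : Matrix m m ℂ) : Prop :=
  ρ.PosSemidef ∧ ρ.trace = 1

/-- The set of (real) entanglement fidelity values achievable with density-matrix inputs. -/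
noncomputable def fidSet {n : Type*} [Fintype n] [DecidableEq n] {ι : Type*} [Fintype ι]
    (K : ι → Matrix n n ℂ) : Set ℝ :=
  {x : ℝ | ∃ ρ : Matrix (n × n) (n × n) ℂ, IsDensity ρ ∧ fid K ρ = (x : ℂ)}

/-- The Choi matrix `J^N = Σ_{j,k} E_{jk} ⊗ N(E_{jk})` of the channel with Kraus
operators `K`. -/
noncomputable def choi {n m : Type*} [Fintype n] [DecidableEq n] [Fintype m] {ι : Type*}
    [Fintype ι] (K : ι → Matrix m n ℂ) : Matrix (n × m) (n × m) ℂ :=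
  Matrix.of fun p q => (∑ i, K i * Matrix.single p.1 q.1 (1 : ℂ) * (K i)ᴴ) p.2 q.2


section General
variable {n : Type*} [Fintype n] [DecidableEq n]

lemma psd_diag_real {τ : Matrix n n ℂ} (hτ : τ.PosSemidef) (j : n) :
    τ j j = ((τ j j).re : ℂ) ∧ 0 ≤ (τ j j).re := by
  have h := hτ.dotProduct_mulVec_nonneg (Pi.single j 1)
  have hs : star (Pi.single j (1:ℂ)) = (Pi.single j 1 : n → ℂ) :=
    funext fun i => by rcases eq_or_ne i j with h | h <;> simp [Pi.single_apply, h]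
  have hv : star (Pi.single j (1:ℂ)) ⬝ᵥ (τ *ᵥ Pi.single j 1) = τ j j := by
    rw [hs, single_dotProduct, Matrix.mulVec_single]
    simp
  rw [hv, Complex.nonneg_iff] at h
  exact ⟨by apply Complex.ext <;> simp [h.2.symm], h.1⟩

/-- trace of (diagonal v * τ). -/
lemma trace_diagonal_mul (v : n → ℂ) (τ : Matrix n n ℂ) :
    (diagonal v * τ).trace = ∑ j, v j * τ j j := by
  simp [Matrix.trace, Matrix.diag, Matrix.diagonal_mul]

/-- Upper bound: for Hermitian A and density ρ, the trace value is at most the top eigenvalue. -/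
lemma trace_le_iSup_eigenvalues {A : Matrix n n ℂ} (hA : A.IsHermitian)
    {ρ : Matrix n n ℂ} (hρ : IsDensity ρ) {x : ℝ} (hx : (A * ρ).trace = (x : ℂ)) :
    x ≤ ⨆ i, hA.eigenvalues i := by
  classical
  set V : Matrix n n ℂ := (hA.eigenvectorUnitary : Matrix n n ℂ) with hV
  set τ : Matrix n n ℂ := star V * ρ * V with hτdef
  have hτpsd : τ.PosSemidef := hρ.1.conjTranspose_mul_mul_same V
  have hVmem : V ∈ Matrix.unitaryGroup n ℂ := hA.eigenvectorUnitary.2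
  have hVV : V * star V = 1 := (Matrix.mem_unitaryGroup_iff).mp hVmem
  have hτtr : τ.trace = 1 := by
    rw [hτdef, Matrix.trace_mul_cycle, hVV, Matrix.one_mul, hρ.2]
  -- rewrite the trace
  have key : (A * ρ).trace = ∑ j, ((hA.eigenvalues j : ℂ) * τ j j) := by
    conv_lhs => rw [hA.spectral_theorem, Unitary.conjStarAlgAut_apply]
    rw [Matrix.mul_assoc, Matrix.mul_assoc, Matrix.trace_mul_comm, ← hV,
      Matrix.mul_assoc (diagonal _) (star V * ρ) V, ← hτdef, trace_diagonal_mul]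
    rfl
  have hbdd : BddAbove (Set.range hA.eigenvalues) := Set.Finite.bddAbove (Set.finite_range _)
  have hr : ∀ j, (τ j j) = ((τ j j).re : ℂ) ∧ 0 ≤ (τ j j).re := fun j => psd_diag_real hτpsd j
  have hsum1 : ∑ j, (τ j j).re = 1 := by
    have ht : τ.trace = ((∑ j, (τ j j).re : ℝ) : ℂ) := by
      rw [Matrix.trace]
      push_cast
      exact Finset.sum_congr rfl fun j _ => (hr j).1
    rw [ht] at hτtr
    exact_mod_cast hτtr
  have hx2 : x = ∑ j, hA.eigenvalues j * (τ j j).re := by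
    have hc : (x:ℂ) = ((∑ j, hA.eigenvalues j * (τ j j).re : ℝ) : ℂ) := by
      rw [← hx, key]
      push_cast
      exact Finset.sum_congr rfl fun j _ => by rw [(hr j).1]; norm_num
    exact_mod_cast hc
  rw [hx2]
  calc ∑ j, hA.eigenvalues j * (τ j j).re ≤ ∑ j, (⨆ i, hA.eigenvalues i) * (τ j j).re :=
      Finset.sum_le_sum fun j _ => mul_le_mul_of_nonneg_right (le_ciSup hbdd j) (hr j).2
    _ = ⨆ i, hA.eigenvalues i := by rw [← Finset.mul_sum, hsum1, mul_one]

end General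

section Attain
variable {n : Type*} [Fintype n] [DecidableEq n]

lemma vecMulVec_star_posSemidef (u : n → ℂ) : (Matrix.vecMulVec u (star u)).PosSemidef := by
  refine .of_dotProduct_mulVec_nonneg ?_ fun x => ?_
  · ext p q
    simp [Matrix.conjTranspose_apply, Matrix.vecMulVec_apply, mul_comm]
  · have h : star x ⬝ᵥ (Matrix.vecMulVec u (star u) *ᵥ x) =
        star (star u ⬝ᵥ x) * (star u ⬝ᵥ x) := by
      simp only [dotProduct, Matrix.mulVec, Matrix.vecMulVec_apply, Pi.star_apply,
        star_sum, star_mul', star_star, Finset.mul_sum, Finset.sum_mul]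
      rw [Finset.sum_comm]
      refine Finset.sum_congr rfl fun p _ => Finset.sum_congr rfl fun q _ => by ring
    rw [h]
    exact star_mul_self_nonneg _

lemma star_dot_self_eigenvectorBasis {A : Matrix n n ℂ} (hA : A.IsHermitian) (j : n) :
    star ⇑(hA.eigenvectorBasis j) ⬝ᵥ ⇑(hA.eigenvectorBasis j) = 1 := by
  have h := hA.eigenvectorBasis.orthonormal.1 j
  have h2 : (inner ℂ (hA.eigenvectorBasis j) (hA.eigenvectorBasis j) : ℂ) = 1 := by
    rw [inner_self_eq_norm_sq_to_K, h]; norm_num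
  rwa [EuclideanSpace.inner_eq_star_dotProduct, dotProduct_comm] at h2

lemma exists_density_trace_eq [Nonempty n] {A : Matrix n n ℂ} (hA : A.IsHermitian) :
    ∃ ρ : Matrix n n ℂ, IsDensity ρ ∧
      (A * ρ).trace = ((⨆ i, hA.eigenvalues i : ℝ) : ℂ) := by
  obtain ⟨j₀, hj₀⟩ := Finite.exists_max hA.eigenvalues
  have hbdd : BddAbove (Set.range hA.eigenvalues) := Set.Finite.bddAbove (Set.finite_range _)
  have hT : (⨆ i, hA.eigenvalues i) = hA.eigenvalues j₀ :=
    le_antisymm (ciSup_le hj₀) (le_ciSup hbdd j₀)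
  set u : n → ℂ := ⇑(hA.eigenvectorBasis j₀) with hu
  have hnorm : star u ⬝ᵥ u = 1 := star_dot_self_eigenvectorBasis hA j₀
  refine ⟨Matrix.vecMulVec u (star u), ⟨vecMulVec_star_posSemidef u, ?_⟩, ?_⟩
  · have : (Matrix.vecMulVec u (star u)).trace = star u ⬝ᵥ u := by
      simp [Matrix.trace, Matrix.diag, Matrix.vecMulVec_apply, dotProduct, mul_comm]
    rw [this, hnorm]
  · have htr : (A * Matrix.vecMulVec u (star u)).trace = star u ⬝ᵥ (A *ᵥ u) := by
      simp only [Matrix.trace, Matrix.diag, Matrix.mul_apply, Matrix.vecMulVec_apply,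
        dotProduct, Matrix.mulVec, Pi.star_apply, Finset.mul_sum]
      refine Finset.sum_congr rfl fun p _ => Finset.sum_congr rfl fun q _ => by ring
    rw [htr, hA.mulVec_eigenvectorBasis, ← hu]
    rw [dotProduct_smul, hnorm, hT]
    simp [RCLike.real_smul_eq_coe_mul]
end Attain

section Comp
variable {n : Type*} [Fintype n] [DecidableEq n] {ι : Type*} [Fintype ι]


lemma chanOut_apply_diag (K : ι → Matrix n n ℂ) (ρ : Matrix (n × n) (n × n) ℂ) (a b : n) :
    chanOut K ρ (a, a) (b, b) =
      ∑ i, ∑ c, ∑ e, K i a c * ρ (a, c) (b, e) * (starRingEnd ℂ) (K i b e) := by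
  simp only [chanOut, Matrix.sum_apply, Matrix.mul_apply, Matrix.conjTranspose_apply,
    Matrix.kroneckerMap_apply, Matrix.one_apply, Fintype.sum_prod_type, ite_mul, one_mul,
    zero_mul, mul_ite, mul_zero, mul_one, Finset.sum_ite_eq,
    Finset.mem_univ, if_true, RCLike.star_def, apply_ite (starRingEnd ℂ), map_zero,
    Finset.sum_ite_irrel, Finset.sum_const_zero, Finset.sum_ite_eq]
  refine Finset.sum_congr rfl fun i _ => ?_
  simp only [Finset.sum_mul]
  rw [Finset.sum_comm]

/-- bilinear kernel -/
noncomputable def Fm (K : ι → Matrix n n ℂ) (ρ : Matrix (n × n) (n × n) ℂ)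
    (p q : n × n) : ℂ :=
  ∑ i, K i p.1 p.2 * ρ p q * (starRingEnd ℂ) (K i q.1 q.2)

lemma fid_eq_sum (K : ι → Matrix n n ℂ) (ρ : Matrix (n × n) (n × n) ℂ) :
    fid K ρ = (∑ p, ∑ q, Fm K ρ p q) / (Fintype.card n) := by
  have hss : ((1 / Real.sqrt (Fintype.card n) : ℝ) : ℂ) *
      ((1 / Real.sqrt (Fintype.card n) : ℝ) : ℂ) = 1 / (Fintype.card n : ℂ) := by
    rw [← Complex.ofReal_mul]
    rw [show (1 / Real.sqrt (Fintype.card n)) * (1 / Real.sqrt (Fintype.card n))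
        = 1 / (Real.sqrt (Fintype.card n) * Real.sqrt (Fintype.card n)) by ring]
    rw [Real.mul_self_sqrt (by positivity)]
    push_cast
    ring
  have h1 : fid K ρ = ∑ a, ∑ b, ((1 / Real.sqrt (Fintype.card n) : ℝ) : ℂ) *
      (chanOut K ρ (a, a) (b, b) * ((1 / Real.sqrt (Fintype.card n) : ℝ) : ℂ)) := by
    simp only [fid, dotProduct, mulVec, maxEnt, Pi.star_apply, RCLike.star_def,
      apply_ite (starRingEnd ℂ), map_zero, Complex.conj_ofReal, Fintype.sum_prod_type,
      ite_mul, zero_mul, mul_ite, mul_zero, Finset.sum_ite_irrel, Finset.sum_const_zero,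
      Finset.sum_ite_eq, Finset.mem_univ, if_true, Finset.mul_sum]
  rw [h1]
  have h2 : ∀ a b : n, ((1 / Real.sqrt (Fintype.card n) : ℝ) : ℂ) *
      (chanOut K ρ (a, a) (b, b) * ((1 / Real.sqrt (Fintype.card n) : ℝ) : ℂ)) =
      (∑ c, ∑ e, Fm K ρ (a, c) (b, e)) / (Fintype.card n) := by
    intro a b
    have hsw : (∑ i, ∑ c, ∑ e, K i a c * ρ (a, c) (b, e) * (starRingEnd ℂ) (K i b e)) =
        ∑ c, ∑ e, Fm K ρ (a, c) (b, e) := by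
      rw [Finset.sum_comm]
      exact Finset.sum_congr rfl fun c _ => by rw [Finset.sum_comm]; rfl
    calc ((1 / Real.sqrt (Fintype.card n) : ℝ) : ℂ) *
        (chanOut K ρ (a, a) (b, b) * ((1 / Real.sqrt (Fintype.card n) : ℝ) : ℂ)) =
        chanOut K ρ (a, a) (b, b) * (((1 / Real.sqrt (Fintype.card n) : ℝ) : ℂ) *
          ((1 / Real.sqrt (Fintype.card n) : ℝ) : ℂ)) := by ring
      _ = (∑ c, ∑ e, Fm K ρ (a, c) (b, e)) / (Fintype.card n) := by
          rw [hss, chanOut_apply_diag, hsw, mul_one_div]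
  simp only [h2]
  simp only [← Finset.sum_div]
  congr 1
  rw [Fintype.sum_prod_type]
  refine Finset.sum_congr rfl fun a _ => ?_
  rw [Finset.sum_comm]
  exact Finset.sum_congr rfl fun c _ => (Fintype.sum_prod_type _).symm

lemma choi_apply (K : ι → Matrix n n ℂ) (p q : n × n) :
    choi K p q = ∑ i, K i p.2 p.1 * (starRingEnd ℂ) (K i q.2 q.1) := by
  simp only [choi, Matrix.of_apply, Matrix.sum_apply, Matrix.mul_apply,
    Matrix.conjTranspose_apply, Matrix.single, Matrix.of_apply, RCLike.star_def,
    mul_ite, mul_one, mul_zero, ite_mul, zero_mul, Finset.sum_ite_irrel,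
    Finset.sum_const_zero, Finset.sum_ite_eq, Finset.sum_ite_eq', Finset.mem_univ, if_true,
    ite_and, apply_ite (starRingEnd ℂ), map_zero]

lemma trace_choi_eq_sum (K : ι → Matrix n n ℂ) (ρ : Matrix (n × n) (n × n) ℂ) :
    (choi K * (ρ.submatrix Prod.swap Prod.swap)ᵀ).trace = ∑ p, ∑ q, Fm K ρ p q := by
  have h1 : (choi K * (ρ.submatrix Prod.swap Prod.swap)ᵀ).trace =
      ∑ p : n × n, ∑ q : n × n, Fm K ρ p.swap q.swap := by
    simp only [Matrix.trace, Matrix.diag, Matrix.mul_apply, Matrix.transpose_apply,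
      Matrix.submatrix_apply]
    refine Finset.sum_congr rfl fun p _ => Finset.sum_congr rfl fun q _ => ?_
    rw [choi_apply, Finset.sum_mul]
    refine Finset.sum_congr rfl fun i _ => ?_
    simp only [Fm, Prod.fst_swap, Prod.snd_swap, Prod.swap]
    ring_nf
  rw [h1]
  rw [Fintype.sum_equiv (Equiv.prodComm n n) _ (fun p => ∑ q, Fm K ρ p q) ?_]
  · intro p
    exact Fintype.sum_equiv (Equiv.prodComm n n) _ _ (fun q => rfl)

end Comp

section NormPart
open scoped Matrix.Norms.L2Operator
variable {n : Type*} [Fintype n] [DecidableEq n]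

lemma clm_apply_eq_mulVec (A : Matrix n n ℂ) (x : EuclideanSpace ℂ n) (i : n) :
    (Matrix.toEuclideanCLM (𝕜 := ℂ) A x) i = (A *ᵥ ⇑x) i := rfl

lemma norm_clm_diagonal_le (v : n → ℂ) (c : ℝ) (hc : 0 ≤ c) (h : ∀ i, ‖v i‖ ≤ c) :
    ‖Matrix.toEuclideanCLM (𝕜 := ℂ) (Matrix.diagonal v)‖ ≤ c := by
  refine ContinuousLinearMap.opNorm_le_bound _ hc fun x => ?_
  rw [EuclideanSpace.norm_eq, EuclideanSpace.norm_eq]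
  rw [← Real.sqrt_sq hc, ← Real.sqrt_mul (by positivity)]
  apply Real.sqrt_le_sqrt
  rw [Finset.mul_sum]
  refine Finset.sum_le_sum fun i _ => ?_
  have hi : (Matrix.toEuclideanCLM (𝕜 := ℂ) (Matrix.diagonal v) x) i = v i * x i := by
    rw [clm_apply_eq_mulVec]
    simp [Matrix.mulVec, dotProduct, Matrix.diagonal, ite_mul]
  rw [hi, norm_mul, mul_pow]
  have h1 : ‖v i‖ ^ 2 ≤ c ^ 2 := by
    apply sq_le_sq' _ (h i); linarith [norm_nonneg (v i)]
  nlinarith [norm_nonneg (x i), sq_nonneg (x i : ℂ).re]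

set_option maxHeartbeats 1000000 in
lemma iSup_eigenvalues_eq_norm [Nonempty n] {A : Matrix n n ℂ} (hpsd : A.PosSemidef)
    (hA : A.IsHermitian) :
    (⨆ i, hA.eigenvalues i) = ‖Matrix.toEuclideanCLM (𝕜 := ℂ) A‖ := by
  obtain ⟨j₀, hj₀⟩ := Finite.exists_max hA.eigenvalues
  have hbdd : BddAbove (Set.range hA.eigenvalues) := Set.Finite.bddAbove (Set.finite_range _)
  have hT : (⨆ i, hA.eigenvalues i) = hA.eigenvalues j₀ :=
    le_antisymm (ciSup_le hj₀) (le_ciSup hbdd j₀)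
  have hnonneg : ∀ i, 0 ≤ hA.eigenvalues i := fun i => hpsd.eigenvalues_nonneg i
  rw [hT]
  apply le_antisymm
  · -- eigenvalue ≤ norm
    have hw : ‖(hA.eigenvectorBasis j₀ : EuclideanSpace ℂ n)‖ = 1 :=
      hA.eigenvectorBasis.orthonormal.1 j₀
    have h1 : Matrix.toEuclideanCLM (𝕜 := ℂ) A (hA.eigenvectorBasis j₀) =
        (hA.eigenvalues j₀ : ℝ) • (hA.eigenvectorBasis j₀ : EuclideanSpace ℂ n) := by
      apply PiLp.ext
      intro i
      rw [clm_apply_eq_mulVec, hA.mulVec_eigenvectorBasis]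
      rfl
    have h2 := (Matrix.toEuclideanCLM (𝕜 := ℂ) A).le_opNorm (hA.eigenvectorBasis j₀)
    rw [h1, norm_smul, hw, mul_one, mul_one, Real.norm_eq_abs,
      abs_of_nonneg (hnonneg j₀)] at h2
    exact h2
  · -- norm ≤ eigenvalue
    have hcstar : ‖Matrix.toEuclideanCLM (𝕜 := ℂ) A‖ = ‖A‖ := (Matrix.cstar_norm_def A).symm
    rw [hcstar]
    conv_lhs => rw [hA.spectral_theorem, Unitary.conjStarAlgAut_apply]
    have hV1 : ‖(hA.eigenvectorUnitary : Matrix n n ℂ)‖ = 1 := by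
      have := CStarRing.norm_coe_unitary (hA.eigenvectorUnitary)
      exact this
    have hV2 : ‖star (hA.eigenvectorUnitary : Matrix n n ℂ)‖ = 1 := by
      have h := CStarRing.norm_coe_unitary (star hA.eigenvectorUnitary)
      rwa [Unitary.coe_star] at h
    have hD : ‖(Matrix.diagonal (RCLike.ofReal ∘ hA.eigenvalues) : Matrix n n ℂ)‖ ≤
        hA.eigenvalues j₀ := by
      rw [Matrix.cstar_norm_def]
      refine norm_clm_diagonal_le _ _ (hnonneg j₀) fun i => ?_
      simp only [Function.comp_apply, RCLike.norm_ofReal, abs_of_nonneg (hnonneg i)]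
      exact hj₀ i
    calc ‖(hA.eigenvectorUnitary : Matrix n n ℂ) *
          Matrix.diagonal (RCLike.ofReal ∘ hA.eigenvalues) *
          star (hA.eigenvectorUnitary : Matrix n n ℂ)‖ ≤
        ‖(hA.eigenvectorUnitary : Matrix n n ℂ) *
          Matrix.diagonal (RCLike.ofReal ∘ hA.eigenvalues)‖ *
          ‖star (hA.eigenvectorUnitary : Matrix n n ℂ)‖ := norm_mul_le _ _
      _ ≤ ‖(hA.eigenvectorUnitary : Matrix n n ℂ)‖ *
          ‖Matrix.diagonal (RCLike.ofReal ∘ hA.eigenvalues)‖ *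
          ‖star (hA.eigenvectorUnitary : Matrix n n ℂ)‖ := by
          exact mul_le_mul_of_nonneg_right (norm_mul_le _ _) (norm_nonneg _)
      _ ≤ 1 * hA.eigenvalues j₀ * 1 := by
          rw [hV1, hV2]; gcongr <;> simp [hD]
      _ = hA.eigenvalues j₀ := by ring

end NormPart

section Glue
variable {n : Type*} [Fintype n] [DecidableEq n] {ι : Type*} [Fintype ι]

lemma fid_eq_trace (K : ι → Matrix n n ℂ) (ρ : Matrix (n × n) (n × n) ℂ) :
    fid K ρ = (choi K * (ρ.submatrix Prod.swap Prod.swap)ᵀ).trace / (Fintype.card n) := by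
  rw [fid_eq_sum, trace_choi_eq_sum]

lemma isDensity_swapT {ρ : Matrix (n × n) (n × n) ℂ} (h : IsDensity ρ) :
    IsDensity ((ρ.submatrix Prod.swap Prod.swap)ᵀ) := by
  refine ⟨(h.1.submatrix Prod.swap).transpose, ?_⟩
  rw [Matrix.trace_transpose, ← h.2]
  simp only [Matrix.trace, Matrix.diag, Matrix.submatrix_apply]
  exact Fintype.sum_equiv (Equiv.prodComm n n) _ _ fun p => rfl

lemma swapT_swapT (ρ : Matrix (n × n) (n × n) ℂ) :
    (((ρ.submatrix Prod.swap Prod.swap)ᵀ).submatrix Prod.swap Prod.swap)ᵀ = ρ := by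
  ext p q
  simp [Matrix.submatrix_apply, Matrix.transpose_apply]

lemma choi_posSemidef (K : ι → Matrix n n ℂ) : (choi K).PosSemidef := by
  have hrw : choi K = ∑ i, Matrix.vecMulVec (fun p : n × n => K i p.2 p.1)
      (star fun p : n × n => K i p.2 p.1) := by
    ext p q
    rw [choi_apply]
    simp [Matrix.sum_apply, Matrix.vecMulVec_apply]
  rw [hrw]
  refine Finset.sum_induction _ _ (fun a b ha hb => ha.add hb) Matrix.PosSemidef.zero
    fun i _ => vecMulVec_star_posSemidef _

end Glue

/-- The maximum entanglement fidelity `O(N)` equals `(1/d)` times the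
largest eigenvalue of the Choi matrix of `N`, which equals `(1/d)·‖J^N‖` for the
spectral norm; moreover the supremum is attained. -/
theorem stmt_2 {d : ℕ} [NeZero d] {ι : Type*} [Fintype ι]
    (K : ι → Matrix (Fin d) (Fin d) ℂ)
    (hK : ∑ i, (K i)ᴴ * K i = 1)
    (hJ : (choi K).IsHermitian) :
    IsGreatest (fidSet K) ((⨆ p, hJ.eigenvalues p) / d) ∧
      (⨆ p, hJ.eigenvalues p) / d = ‖Matrix.toEuclideanCLM (𝕜 := ℂ) (choi K)‖ / d := by
  have hd : (0:ℝ) < d := by exact_mod_cast Nat.pos_of_ne_zero (NeZero.ne d)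
  have hcard : (Fintype.card (Fin d) : ℂ) = (d : ℂ) := by norm_num
  have hpsd := choi_posSemidef K
  constructor
  · constructor
    · -- membership
      obtain ⟨τ, hτ, htr⟩ := exists_density_trace_eq hJ
      refine ⟨(τ.submatrix Prod.swap Prod.swap)ᵀ, isDensity_swapT hτ, ?_⟩
      rw [fid_eq_trace, swapT_swapT, htr, hcard]
      push_cast
      ring
    · rintro x ⟨ρ, hρ, hfid⟩
      rw [fid_eq_trace, hcard] at hfid
      have hdc : (d : ℂ) ≠ 0 := by
        exact_mod_cast hd.ne'
      have htr : (choi K * (ρ.submatrix Prod.swap Prod.swap)ᵀ).trace = ((x * d : ℝ) : ℂ) := by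
        rw [div_eq_iff hdc] at hfid
        rw [hfid]
        push_cast
        ring
      have hle := trace_le_iSup_eigenvalues hJ (isDensity_swapT hρ) htr
      rw [le_div_iff₀ hd]
      exact hle
  · congr 1
    exact iSup_eigenvalues_eq_norm hpsd hJ
end

section
/- Multiplicativity of the maximum entanglement fidelity: let N₁ : M_{d₁}(ℂ) → M_{d₁}(ℂ) be a channel with Kraus operators {J_q} and N₂ : M_{d₂}(ℂ) → M_{d₂}(ℂ) a channel with Kraus operators {K_r}, and let N₁⊗N₂ : M_{d₁d₂}(ℂ) → M_{d₁d₂}(ℂ) be the channel with Kraus operators {J_q ⊗ K_r} (Kronecker products, identifying ℂ^{d₁d₂} with ℂ^{d₁}⊗ℂ^{d₂}). Then O(N₁⊗N₂) = O(N₁)·O(N₂), where O denotes the maximum entanglement fidelity of each channel on its respective dimension. -/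
open Matrix
open scoped Kronecker ComplexOrder

namespace Stmt5

set_option linter.unusedSectionVars false

variable {m l : Type*} [Fintype m] [DecidableEq m] [Fintype l] [DecidableEq l]

lemma sum_mulVec' {ι : Type*} (s : Finset ι) (A : ι → Matrix m m ℂ) (v : m → ℂ) :
    (∑ i ∈ s, A i) *ᵥ v = ∑ i ∈ s, A i *ᵥ v := by
  ext j
  simp only [mulVec, dotProduct, Matrix.sum_apply, Finset.sum_mul, Finset.sum_apply]
  exact Finset.sum_comm

lemma dot_sum' {ι : Type*} (s : Finset ι) (v : m → ℂ) (y : ι → m → ℂ) :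
    v ⬝ᵥ (∑ i ∈ s, y i) = ∑ i ∈ s, v ⬝ᵥ y i := by
  simp only [dotProduct, Finset.sum_apply, Finset.mul_sum]
  exact Finset.sum_comm

lemma dot_comp (e : m ≃ l) (f g : l → ℂ) : (f ∘ e) ⬝ᵥ (g ∘ e) = f ⬝ᵥ g :=
  Fintype.sum_equiv e _ _ fun _ => rfl

open scoped MatrixOrder in
lemma posSemidef_iff_eq_transpose_mul_self {A : Matrix m m ℂ} :
    A.PosSemidef ↔ ∃ B : Matrix m m ℂ, A = Bᴴ * B :=
  ⟨fun h => CStarAlgebra.nonneg_iff_eq_star_mul_self.mp h.nonneg,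
    fun ⟨B, hB⟩ => hB ▸ posSemidef_conjTranspose_mul_self B⟩

lemma vecMulVec_star_posSemidef (v : m → ℂ) : (vecMulVec v (star v)).PosSemidef := by
  rw [vecMulVec_eq Unit, ← conjTranspose_replicateCol]
  exact posSemidef_self_mul_conjTranspose _

lemma dot_outer (u x y : m → ℂ) :
    star u ⬝ᵥ (vecMulVec x (star y)) *ᵥ u = (star u ⬝ᵥ x) * (star y ⬝ᵥ u) := by
  simp only [mulVec, dotProduct, vecMulVec_apply, Pi.star_apply, Finset.sum_mul,
    Finset.mul_sum]
  rw [Finset.sum_comm]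
  refine Finset.sum_congr rfl fun a _ => Finset.sum_congr rfl fun b _ => by ring

lemma trace_outer (v w : m → ℂ) : (vecMulVec v (star w)).trace = star w ⬝ᵥ v := by
  simp only [Matrix.trace, Matrix.diag, vecMulVec_apply, dotProduct, Pi.star_apply]
  exact Finset.sum_congr rfl fun a _ => by ring

lemma trace_mul_outer (ρ : Matrix m m ℂ) (v w : m → ℂ) :
    (ρ * vecMulVec v (star w)).trace = star w ⬝ᵥ ρ *ᵥ v := by
  simp only [Matrix.trace, Matrix.diag, mul_apply, vecMulVec_apply, dotProduct,
    mulVec, Pi.star_apply, Finset.mul_sum]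
  refine Finset.sum_congr rfl fun a _ => Finset.sum_congr rfl fun b _ => by ring

noncomputable def wv {n : Type*} [Fintype n] [DecidableEq n] {ι : Type*} [Fintype ι]
    (K : ι → Matrix n n ℂ) (i : ι) : n × n → ℂ :=
  ((1 : Matrix n n ℂ) ⊗ₖ K i)ᴴ *ᵥ maxEnt n

noncomputable def KM {n : Type*} [Fintype n] [DecidableEq n] {ι : Type*} [Fintype ι]
    (K : ι → Matrix n n ℂ) : Matrix (n × n) (n × n) ℂ :=
  ∑ i, vecMulVec (wv K i) (star (wv K i))

variable {n : Type*} [Fintype n] [DecidableEq n] {ι : Type*} [Fintype ι]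

lemma fid_eq (K : ι → Matrix n n ℂ) (ρ : Matrix (n × n) (n × n) ℂ) :
    fid K ρ = ∑ i, star (wv K i) ⬝ᵥ ρ *ᵥ wv K i := by
  unfold fid chanOut wv
  rw [sum_mulVec', dot_sum']
  refine Finset.sum_congr rfl fun i _ => ?_
  rw [star_mulVec, conjTranspose_conjTranspose, ← dotProduct_mulVec, mulVec_mulVec,
    mulVec_mulVec]

lemma fid_eq_trace (K : ι → Matrix n n ℂ) (ρ : Matrix (n × n) (n × n) ℂ) :
    fid K ρ = (ρ * KM K).trace := by
  rw [fid_eq, KM, Finset.mul_sum, trace_sum]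
  exact Finset.sum_congr rfl fun i _ => (trace_mul_outer ρ _ _).symm

lemma posSemidef_sum {α : Type*} (s : Finset α) (f : α → Matrix m m ℂ)
    (h : ∀ i ∈ s, (f i).PosSemidef) : (∑ i ∈ s, f i).PosSemidef := by
  classical
  induction s using Finset.induction_on with
  | empty => simpa using Matrix.PosSemidef.zero
  | @insert a s ha ih =>
    rw [Finset.sum_insert ha]
    exact (h a (Finset.mem_insert_self a s)).add (ih fun i hi => h i (Finset.mem_insert_of_mem hi))

lemma KM_posSemidef (K : ι → Matrix n n ℂ) : (KM K).PosSemidef :=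
  posSemidef_sum _ _ fun i _ => vecMulVec_star_posSemidef _

lemma trace_mul_nonneg {A B : Matrix m m ℂ} (hA : A.PosSemidef) (hB : B.PosSemidef) :
    0 ≤ (A * B).trace := by
  obtain ⟨C, rfl⟩ := posSemidef_iff_eq_transpose_mul_self.mp hA
  rw [Matrix.mul_assoc, trace_mul_comm]
  have h2 : (C * B * Cᴴ).PosSemidef := hB.mul_mul_conjTranspose_same C
  rw [Matrix.trace]
  exact Finset.sum_nonneg fun i _ => by
    have := h2.dotProduct_mulVec_nonneg (Pi.single i 1)
    simpa [mulVec_single, dotProduct, Pi.single_apply, Matrix.diag] using this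

lemma star_dot_self (v : m → ℂ) : star v ⬝ᵥ v = ((∑ i, ‖v i‖ ^ 2 : ℝ) : ℂ) := by
  push_cast
  refine Finset.sum_congr rfl fun i _ => ?_
  simp only [Pi.star_apply, RCLike.star_def]
  rw [mul_comm, Complex.mul_conj']

lemma trace_conjTranspose_mul_self (B : Matrix m m ℂ) :
    (Bᴴ * B).trace = ((∑ i, ∑ j, ‖B j i‖ ^ 2 : ℝ) : ℂ) := by
  push_cast
  simp only [Matrix.trace, Matrix.diag, mul_apply, conjTranspose_apply]
  refine Finset.sum_congr rfl fun i _ => Finset.sum_congr rfl fun j _ => ?_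
  simp only [RCLike.star_def]
  rw [mul_comm, Complex.mul_conj']

/-- Cauchy–Schwarz bound: `‖B *ᵥ w‖² ≤ Tr(BᴴB) ‖w‖²`, real version. -/
lemma mulVec_norm_sq_le (B : Matrix m m ℂ) (w : m → ℂ) :
    (∑ i, ‖(B *ᵥ w) i‖ ^ 2) ≤ (∑ i, ∑ j, ‖B j i‖ ^ 2) * ∑ j, ‖w j‖ ^ 2 := by
  rw [Finset.sum_comm (γ := m), Finset.sum_mul]
  refine Finset.sum_le_sum fun i _ => ?_
  calc ‖(B *ᵥ w) i‖ ^ 2 ≤ (∑ j, ‖B i j‖ * ‖w j‖) ^ 2 := by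
        refine pow_le_pow_left₀ (norm_nonneg _) ?_ 2
        refine (norm_sum_le _ _).trans_eq ?_
        exact Finset.sum_congr rfl fun j _ => norm_mul _ _
    _ ≤ (∑ j, ‖B i j‖ ^ 2) * ∑ j, ‖w j‖ ^ 2 :=
        Finset.sum_mul_sq_le_sq_mul_sq _ _ _

/-- For a PSD matrix of unit trace, the quadratic form is bounded by `‖w‖²`. -/
lemma quad_le_of_trace_one {ρ : Matrix m m ℂ} (hρ : ρ.PosSemidef) (ht : ρ.trace = 1)
    (w : m → ℂ) : star w ⬝ᵥ ρ *ᵥ w ≤ star w ⬝ᵥ w := by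
  obtain ⟨B, rfl⟩ := posSemidef_iff_eq_transpose_mul_self.mp hρ
  have key : star w ⬝ᵥ (Bᴴ * B) *ᵥ w = star (B *ᵥ w) ⬝ᵥ (B *ᵥ w) := by
    rw [← mulVec_mulVec, dotProduct_mulVec, ← star_mulVec]
  rw [key, star_dot_self, star_dot_self]
  rw [trace_conjTranspose_mul_self] at ht
  have h1 : (∑ i, ∑ j, ‖B j i‖ ^ 2 : ℝ) = 1 := by exact_mod_cast ht
  have := (mulVec_norm_sq_le B w).trans_eq (by rw [h1, one_mul])
  exact_mod_cast this

lemma fid_nonneg {K : ι → Matrix n n ℂ} {ρ : Matrix (n × n) (n × n) ℂ}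
    (hρ : ρ.PosSemidef) : 0 ≤ fid K ρ := by
  rw [fid_eq]
  exact Finset.sum_nonneg fun i _ => hρ.dotProduct_mulVec_nonneg (wv K i)

lemma fid_eq_re {K : ι → Matrix n n ℂ} {ρ : Matrix (n × n) (n × n) ℂ}
    (hρ : ρ.PosSemidef) : fid K ρ = ((fid K ρ).re : ℝ) := by
  have h := fid_nonneg (K := K) hρ
  rw [Complex.nonneg_iff] at h
  exact Complex.ext (by simp) (by simp [← h.2])

lemma re_mem_fidSet {K : ι → Matrix n n ℂ} {ρ : Matrix (n × n) (n × n) ℂ}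
    (hρ : IsDensity ρ) : (fid K ρ).re ∈ fidSet K :=
  ⟨ρ, hρ, fid_eq_re hρ.1⟩

lemma fidSet_nonneg {K : ι → Matrix n n ℂ} {x : ℝ} (hx : x ∈ fidSet K) : 0 ≤ x := by
  obtain ⟨ρ, hρ, hfid⟩ := hx
  have := fid_nonneg (K := K) hρ.1
  rw [hfid] at this
  exact_mod_cast this

lemma bddAbove_fidSet (K : ι → Matrix n n ℂ) : BddAbove (fidSet K) := by
  refine ⟨∑ i, (∑ p, ‖wv K i p‖ ^ 2), fun x hx => ?_⟩
  obtain ⟨ρ, hρ, hfid⟩ := hx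
  have hb : fid K ρ ≤ ((∑ i, ∑ p, ‖wv K i p‖ ^ 2 : ℝ) : ℂ) := by
    rw [fid_eq, Complex.ofReal_sum]
    refine Finset.sum_le_sum fun i _ => ?_
    have := quad_le_of_trace_one hρ.1 hρ.2 (wv K i)
    rwa [star_dot_self] at this
  rw [hfid] at hb
  exact_mod_cast hb

lemma posSemidef_real_smul {M : Matrix m m ℂ} (hM : M.PosSemidef) {r : ℝ} (hr : 0 ≤ r) :
    ((r : ℂ) • M).PosSemidef := by
  refine PosSemidef.of_dotProduct_mulVec_nonneg ?_ ?_
  · show ((r : ℂ) • M)ᴴ = _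
    rw [conjTranspose_smul, RCLike.star_def, Complex.conj_ofReal, hM.1]
  · intro x
    rw [smul_mulVec, dotProduct_smul, smul_eq_mul]
    exact mul_nonneg (by exact_mod_cast hr) (hM.dotProduct_mulVec_nonneg x)

lemma fidSet_nonempty [Nonempty n] (K : ι → Matrix n n ℂ) : (fidSet K).Nonempty := by
  set c : ℝ := ((Fintype.card (n × n) : ℝ))⁻¹ with hc
  have hcard : (0 : ℝ) < Fintype.card (n × n) := by
    have : Nonempty (n × n) := inferInstance
    exact_mod_cast Fintype.card_pos
  have hρ : IsDensity ((c : ℂ) • (1 : Matrix (n × n) (n × n) ℂ)) := by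
    constructor
    · exact posSemidef_real_smul Matrix.PosSemidef.one (by positivity)
    · rw [trace_smul, trace_one, smul_eq_mul, hc]
      push_cast
      field_simp
  exact ⟨_, re_mem_fidSet hρ⟩

lemma csSup_fidSet_nonneg [Nonempty n] (K : ι → Matrix n n ℂ) : 0 ≤ sSup (fidSet K) := by
  obtain ⟨x, hx⟩ := fidSet_nonempty K
  exact (fidSet_nonneg hx).trans (le_csSup (bddAbove_fidSet K) hx)

lemma quad_KM (K : ι → Matrix n n ℂ) (v : n × n → ℂ) :
    star v ⬝ᵥ KM K *ᵥ v = fid K (vecMulVec v (star v)) := by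
  rw [fid_eq, KM, sum_mulVec', dot_sum']
  refine Finset.sum_congr rfl fun i _ => ?_
  rw [dot_outer, dot_outer, mul_comm]

lemma outer_isDensity {v : m → ℂ} (hv : star v ⬝ᵥ v = 1) :
    IsDensity (vecMulVec v (star v)) := by
  refine ⟨vecMulVec_star_posSemidef v, ?_⟩
  rw [trace_outer, hv]

lemma KM_quad_le [Nonempty n] (K : ι → Matrix n n ℂ) (v : n × n → ℂ) :
    star v ⬝ᵥ KM K *ᵥ v ≤ ((sSup (fidSet K) : ℝ) : ℂ) * (star v ⬝ᵥ v) := by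
  by_cases hv : v = 0
  · simp [hv, dotProduct]
  · set c : ℝ := ∑ p, ‖v p‖ ^ 2 with hcdef
    have hc : 0 < c := by
      obtain ⟨p, hp⟩ := Function.ne_iff.mp hv
      exact Finset.sum_pos' (fun q _ => by positivity)
        ⟨p, Finset.mem_univ p, pow_pos (norm_pos_iff.mpr hp) 2⟩
    set a : ℝ := (Real.sqrt c)⁻¹ with ha
    have ha2 : a ^ 2 * c = 1 := by
      rw [ha, ← Real.sqrt_inv, Real.sq_sqrt (by positivity)]
      field_simp
    set u : n × n → ℂ := (a : ℂ) • v with hu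
    have huv : star u ⬝ᵥ u = 1 := by
      rw [hu, star_smul, smul_dotProduct, dotProduct_smul, star_dot_self,
        RCLike.star_def, Complex.conj_ofReal, smul_eq_mul, smul_eq_mul]
      norm_cast
      nlinarith [ha2]
    have hqu : star u ⬝ᵥ KM K *ᵥ u = (a : ℂ) ^ 2 * (star v ⬝ᵥ KM K *ᵥ v) := by
      rw [hu, star_smul, smul_dotProduct, mulVec_smul, dotProduct_smul,
        RCLike.star_def, Complex.conj_ofReal, smul_eq_mul, smul_eq_mul]
      ring
    set x : ℝ := (fid K (vecMulVec u (star u))).re with hxdef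
    have hx : (x : ℂ) = star u ⬝ᵥ KM K *ᵥ u := by
      rw [quad_KM]
      exact (fid_eq_re (vecMulVec_star_posSemidef u)).symm
    have hxle : x ≤ sSup (fidSet K) :=
      le_csSup (bddAbove_fidSet K) (re_mem_fidSet (outer_isDensity huv))
    have h2 : ((c * x : ℝ) : ℂ) = star v ⬝ᵥ KM K *ᵥ v := by
      have : ((c * x : ℝ) : ℂ) = (((a ^ 2 * c : ℝ)) : ℂ) * (star v ⬝ᵥ KM K *ᵥ v) := by
        push_cast
        rw [hx, hqu]
        ring
      rw [this, ha2]
      simp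
    rw [star_dot_self, ← h2, ← Complex.ofReal_mul, Complex.real_le_real]
    nlinarith [hc.le, hxle, csSup_fidSet_nonneg K]

lemma psd_smul_one_sub {M : Matrix m m ℂ} (hM : M.IsHermitian) (r : ℝ)
    (h : ∀ v, star v ⬝ᵥ M *ᵥ v ≤ (r : ℂ) * (star v ⬝ᵥ v)) :
    ((r : ℂ) • 1 - M).PosSemidef := by
  refine PosSemidef.of_dotProduct_mulVec_nonneg ?_ ?_
  · show ((r : ℂ) • 1 - M)ᴴ = _
    rw [conjTranspose_sub, conjTranspose_smul, RCLike.star_def, Complex.conj_ofReal,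
      conjTranspose_one, hM.eq]
  · intro x
    rw [sub_mulVec, dotProduct_sub, smul_mulVec, one_mulVec, dotProduct_smul,
      smul_eq_mul]
    exact sub_nonneg.mpr (h x)

lemma conjTranspose_kron (A : Matrix m m ℂ) (B : Matrix l l ℂ) :
    (A ⊗ₖ B)ᴴ = Aᴴ ⊗ₖ Bᴴ := by
  ext p q
  simp [conjTranspose_apply, mul_comm]

lemma PosSemidef.kron {A : Matrix m m ℂ} {B : Matrix l l ℂ}
    (hA : A.PosSemidef) (hB : B.PosSemidef) : (A ⊗ₖ B).PosSemidef := by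
  obtain ⟨C, rfl⟩ := posSemidef_iff_eq_transpose_mul_self.mp hA
  obtain ⟨D, rfl⟩ := posSemidef_iff_eq_transpose_mul_self.mp hB
  rw [Matrix.mul_kronecker_mul, ← conjTranspose_kron]
  exact posSemidef_conjTranspose_mul_self _

lemma kron_smul_one_decomp (M₁ : Matrix m m ℂ) (M₂ : Matrix l l ℂ) (r₁ r₂ : ℝ) :
    ((r₁ * r₂ : ℝ) : ℂ) • (1 : Matrix (m × l) (m × l) ℂ) - M₁ ⊗ₖ M₂
      = (((r₁ : ℂ) • 1 - M₁) ⊗ₖ M₂) + (r₁ : ℂ) • ((1 : Matrix m m ℂ) ⊗ₖ ((r₂ : ℂ) • 1 - M₂)) := by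
  ext ⟨a, b⟩ ⟨c, d⟩
  simp only [Matrix.sub_apply, Matrix.smul_apply, Matrix.add_apply, kroneckerMap_apply,
    Matrix.one_apply, Prod.mk.injEq, smul_eq_mul]
  by_cases h1 : a = c <;> by_cases h2 : b = d <;> simp [h1, h2] <;> push_cast <;> ring

lemma trace_mul_submatrix (e : m ≃ l) (A : Matrix m m ℂ) (B : Matrix l l ℂ) :
    (A * B.submatrix e e).trace = (A.submatrix e.symm e.symm * B).trace := by
  simp only [Matrix.trace, Matrix.diag, mul_apply, submatrix_apply]
  refine Fintype.sum_equiv e _ _ fun p => ?_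
  refine Fintype.sum_equiv e _ _ fun q => ?_
  simp

lemma trace_submatrix_equiv (e : m ≃ l) (B : Matrix l l ℂ) :
    (B.submatrix e e).trace = B.trace := by
  simp only [Matrix.trace, Matrix.diag, submatrix_apply]
  exact Fintype.sum_equiv e _ _ fun p => rfl

lemma kron_mulVec (A : Matrix m m ℂ) (B : Matrix l l ℂ) (u : m → ℂ) (v : l → ℂ) :
    (A ⊗ₖ B) *ᵥ (fun p => u p.1 * v p.2) = fun p => (A *ᵥ u) p.1 * (B *ᵥ v) p.2 := by
  ext ⟨a, b⟩
  simp only [mulVec, dotProduct, kroneckerMap_apply]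
  rw [Fintype.sum_prod_type, Finset.sum_mul_sum]
  exact Finset.sum_congr rfl fun c _ => Finset.sum_congr rfl fun d _ => by ring

lemma dot_kron (u x : m → ℂ) (v y : l → ℂ) :
    (fun p : m × l => u p.1 * v p.2) ⬝ᵥ (fun p => x p.1 * y p.2) = (u ⬝ᵥ x) * (v ⬝ᵥ y) := by
  simp only [dotProduct]
  rw [Fintype.sum_prod_type, Finset.sum_mul_sum]
  exact Finset.sum_congr rfl fun c _ => Finset.sum_congr rfl fun d _ => by ring

section Product

variable {ι κ : Type*} [Fintype ι] [Fintype κ]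

/-- The index shuffle `((a,b),(c,d)) ↦ ((a,c),(b,d))`. -/
abbrev eqv (m l : Type*) : ((m × l) × (m × l)) ≃ ((m × m) × (l × l)) :=
  Equiv.prodProdProdComm m l m l

lemma maxEnt_prod (p : (m × l) × (m × l)) :
    maxEnt (m × l) p = maxEnt m (eqv m l p).1 * maxEnt l (eqv m l p).2 := by
  obtain ⟨⟨a, b⟩, ⟨c, d⟩⟩ := p
  simp only [maxEnt, Equiv.prodProdProdComm_apply, Prod.ext_iff]
  by_cases h1 : a = c <;> by_cases h2 : b = d <;> simp [h1, h2]
  ring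

lemma one_kron_kron (A : Matrix m m ℂ) (B : Matrix l l ℂ) :
    (1 : Matrix (m × l) (m × l) ℂ) ⊗ₖ (A ⊗ₖ B)
      = (((1 : Matrix m m ℂ) ⊗ₖ A) ⊗ₖ ((1 : Matrix l l ℂ) ⊗ₖ B)).submatrix (eqv m l) (eqv m l) := by
  ext ⟨⟨a, b⟩, ⟨c, d⟩⟩ ⟨⟨a', b'⟩, ⟨c', d'⟩⟩
  simp only [kroneckerMap_apply, Matrix.one_apply, Prod.mk.injEq, submatrix_apply,
    Equiv.prodProdProdComm_apply]
  by_cases h1 : a = a' <;> by_cases h2 : b = b' <;> simp [h1, h2]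

lemma wv_prod (J : ι → Matrix m m ℂ) (K : κ → Matrix l l ℂ) (i : ι × κ) :
    wv (fun p : ι × κ => J p.1 ⊗ₖ K p.2) i
      = (fun s : (m × m) × (l × l) => wv J i.1 s.1 * wv K i.2 s.2) ∘ (eqv m l) := by
  unfold wv
  rw [one_kron_kron, conjTranspose_submatrix, submatrix_mulVec_equiv]
  have hme : maxEnt (m × l) ∘ (eqv m l).symm
      = fun s : (m × m) × (l × l) => maxEnt m s.1 * maxEnt l s.2 := by
    funext s
    rw [Function.comp_apply, maxEnt_prod, Equiv.apply_symm_apply]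
  rw [hme, conjTranspose_kron, kron_mulVec]

lemma KM_prod (J : ι → Matrix m m ℂ) (K : κ → Matrix l l ℂ) :
    KM (fun p : ι × κ => J p.1 ⊗ₖ K p.2)
      = (KM J ⊗ₖ KM K).submatrix (eqv m l) (eqv m l) := by
  ext p p'
  simp only [KM, Matrix.sum_apply, vecMulVec_apply, Pi.star_apply, submatrix_apply,
    kroneckerMap_apply, wv_prod, Function.comp_apply]
  conv_rhs => rw [Finset.sum_mul_sum]
  rw [Fintype.sum_prod_type]
  refine Finset.sum_congr rfl fun q _ => Finset.sum_congr rfl fun r _ => ?_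
  simp only [star_mul']
  ring

end Product

section Main

variable {ι κ : Type*} [Fintype ι] [Fintype κ]

lemma fid_prod_eq (J : ι → Matrix m m ℂ) (K : κ → Matrix l l ℂ)
    (ρ₁ : Matrix (m × m) (m × m) ℂ) (ρ₂ : Matrix (l × l) (l × l) ℂ) :
    fid (fun p : ι × κ => J p.1 ⊗ₖ K p.2) ((ρ₁ ⊗ₖ ρ₂).submatrix (eqv m l) (eqv m l))
      = fid J ρ₁ * fid K ρ₂ := by
  rw [fid_eq, fid_eq, fid_eq, Finset.sum_mul_sum, Fintype.sum_prod_type]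
  refine Finset.sum_congr rfl fun q _ => Finset.sum_congr rfl fun r _ => ?_
  rw [wv_prod]
  set uu : (m × m) × (l × l) → ℂ := fun s => wv J q s.1 * wv K r s.2 with huu
  have h1 : (ρ₁ ⊗ₖ ρ₂).submatrix (eqv m l) (eqv m l) *ᵥ (uu ∘ (eqv m l))
      = ((ρ₁ ⊗ₖ ρ₂) *ᵥ uu) ∘ (eqv m l) := by
    rw [submatrix_mulVec_equiv]
    congr 1
  have h2 : star (uu ∘ (eqv m l)) = (star uu) ∘ (eqv m l) := rfl
  rw [h1, h2, dot_comp]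
  have h3 : star uu = fun s : (m × m) × (l × l) => star (wv J q) s.1 * star (wv K r) s.2 := by
    funext s
    simp [huu, star_mul']
  rw [h3, huu, kron_mulVec, dot_kron]

lemma prod_mem_fidSet (J : ι → Matrix m m ℂ) (K : κ → Matrix l l ℂ)
    {x₁ x₂ : ℝ} (h₁ : x₁ ∈ fidSet J) (h₂ : x₂ ∈ fidSet K) :
    x₁ * x₂ ∈ fidSet (fun p : ι × κ => J p.1 ⊗ₖ K p.2) := by
  obtain ⟨ρ₁, hρ₁, hf₁⟩ := h₁
  obtain ⟨ρ₂, hρ₂, hf₂⟩ := h₂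
  refine ⟨(ρ₁ ⊗ₖ ρ₂).submatrix (eqv m l) (eqv m l), ⟨?_, ?_⟩, ?_⟩
  · exact (PosSemidef.kron hρ₁.1 hρ₂.1).submatrix _
  · rw [trace_submatrix_equiv, trace_kronecker, hρ₁.2, hρ₂.2, mul_one]
  · rw [fid_prod_eq, hf₁, hf₂, Complex.ofReal_mul]

lemma fid_prod_le [Nonempty m] [Nonempty l] (J : ι → Matrix m m ℂ) (K : κ → Matrix l l ℂ)
    {σ : Matrix ((m × l) × (m × l)) ((m × l) × (m × l)) ℂ} (hσ : IsDensity σ) :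
    fid (fun p : ι × κ => J p.1 ⊗ₖ K p.2) σ
      ≤ ((sSup (fidSet J) * sSup (fidSet K) : ℝ) : ℂ) := by
  set r₁ : ℝ := sSup (fidSet J)
  set r₂ : ℝ := sSup (fidSet K)
  set N : Matrix ((m × m) × (l × l)) ((m × m) × (l × l)) ℂ := KM J ⊗ₖ KM K with hN
  set e := eqv m l
  set σ' := σ.submatrix e.symm e.symm with hσ'
  have hfid : fid (fun p : ι × κ => J p.1 ⊗ₖ K p.2) σ = (σ' * N).trace := by
    rw [fid_eq_trace, KM_prod, trace_mul_submatrix]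
  have hP : (((r₁ * r₂ : ℝ) : ℂ) • 1 - N).PosSemidef := by
    rw [hN, kron_smul_one_decomp]
    have hJle := psd_smul_one_sub (KM_posSemidef J).1 r₁ (KM_quad_le J)
    have hKle := psd_smul_one_sub (KM_posSemidef K).1 r₂ (KM_quad_le K)
    exact (PosSemidef.kron hJle (KM_posSemidef K)).add
      (posSemidef_real_smul (PosSemidef.kron Matrix.PosSemidef.one hKle)
        (csSup_fidSet_nonneg J))
  have hσ'd : σ'.PosSemidef := hσ.1.submatrix _
  have hσ't : σ'.trace = 1 := by rw [hσ', trace_submatrix_equiv, hσ.2]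
  have := trace_mul_nonneg hσ'd hP
  rw [Matrix.mul_sub, trace_sub, sub_nonneg, mul_smul_comm, mul_one, trace_smul,
    smul_eq_mul, hσ't, mul_one] at this
  rw [hfid]
  exact this

end Main

end Stmt5

/-- Multiplicativity of the maximum entanglement fidelity: if
`N₁` has Kraus operators `{J_q}` on `ℂ^{d₁}` and `N₂` has Kraus operators `{K_r}` on
`ℂ^{d₂}`, then the channel `N₁ ⊗ N₂` with Kraus operators `{J_q ⊗ K_r}` (identifying
`ℂ^{d₁ d₂}` with `ℂ^{d₁} ⊗ ℂ^{d₂}`) satisfies `O(N₁ ⊗ N₂) = O(N₁) · O(N₂)`. -/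
theorem stmt_5 {d₁ d₂ : ℕ} [NeZero d₁] [NeZero d₂] {ι κ : Type*} [Fintype ι] [Fintype κ]
    (J : ι → Matrix (Fin d₁) (Fin d₁) ℂ) (K : κ → Matrix (Fin d₂) (Fin d₂) ℂ)
    (hJ : ∑ q, (J q)ᴴ * J q = 1) (hK : ∑ r, (K r)ᴴ * K r = 1) :
    sSup (fidSet (fun p : ι × κ => J p.1 ⊗ₖ K p.2))
      = sSup (fidSet J) * sSup (fidSet K) := by

  classical
  set S := fidSet (fun p : ι × κ => J p.1 ⊗ₖ K p.2) with hS
  set r₁ := sSup (fidSet J) with hr₁def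
  set r₂ := sSup (fidSet K) with hr₂def
  have hub : ∀ y ∈ S, y ≤ r₁ * r₂ := by
    rintro y ⟨σ, hσ, hfid⟩
    have h := Stmt5.fid_prod_le J K hσ
    rw [hfid] at h
    exact_mod_cast h
  have hr₁ : 0 ≤ r₁ := Stmt5.csSup_fidSet_nonneg J
  have hr₂ : 0 ≤ r₂ := Stmt5.csSup_fidSet_nonneg K
  refine le_antisymm (Real.sSup_le hub (mul_nonneg hr₁ hr₂)) ?_
  have hSbdd : BddAbove S := ⟨r₁ * r₂, hub⟩
  have hT0 : 0 ≤ sSup S := Stmt5.csSup_fidSet_nonneg _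
  have key : ∀ x₁ ∈ fidSet J, ∀ x₂ ∈ fidSet K, x₁ * x₂ ≤ sSup S :=
    fun x₁ h₁ x₂ h₂ => le_csSup hSbdd (Stmt5.prod_mem_fidSet J K h₁ h₂)
  have step : ∀ x₁ ∈ fidSet J, x₁ * r₂ ≤ sSup S := by
    intro x₁ h₁
    rcases lt_or_eq_of_le (Stmt5.fidSet_nonneg h₁) with hpos | h0
    · have hd : r₂ ≤ sSup S / x₁ := by
        refine Real.sSup_le (fun x₂ h₂ => ?_) (div_nonneg hT0 hpos.le)
        rw [le_div_iff₀ hpos]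
        have := key x₁ h₁ x₂ h₂
        nlinarith
      calc x₁ * r₂ ≤ x₁ * (sSup S / x₁) := by nlinarith
        _ = sSup S := by field_simp
    · rw [← h0, zero_mul]; exact hT0
  rcases lt_or_eq_of_le hr₂ with hpos | h0
  · have hd : r₁ ≤ sSup S / r₂ := by
      refine Real.sSup_le (fun x₁ h₁ => ?_) (div_nonneg hT0 hpos.le)
      rw [le_div_iff₀ hpos]
      exact step x₁ h₁
    calc r₁ * r₂ ≤ (sSup S / r₂) * r₂ := by nlinarith
      _ = sSup S := div_mul_cancel₀ _ hpos.ne'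
  · rw [← h0, mul_zero]; exact hT0
end

section
/- Let 0 ≤ p ≤ 1 and let N be the qubit amplitude damping channel with Kraus operators K₀ = [[1,0],[0,√(1−p)]] and K₁ = [[0,√p],[0,0]]. Then the maximum entanglement fidelity O(N) = 1 − p/2, and this value is attained by the input density matrix Λ = v v†/(2 − p), where v = vec(K₀) = e₀⊗e₀ + √(1−p)·e₁⊗e₁ ∈ ℂ²⊗ℂ². -/
open Matrix
open scoped Kronecker ComplexOrder

lemma fid_formula (s t : ℝ) (ρ : Matrix (Fin 2 × Fin 2) (Fin 2 × Fin 2) ℂ) :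
    fid ![!![1, 0; 0, (s:ℂ)], !![0, (t:ℂ); 0, 0]] ρ =
      (1/2) * (ρ (0,0) (0,0) + s * ρ (0,0) (1,1) + s * ρ (1,1) (0,0)
        + s^2 * ρ (1,1) (1,1) + t^2 * ρ (0,1) (0,1)) := by
  have h2 : (((Real.sqrt 2 : ℝ) : ℂ))⁻¹ ^ 2 = 1/2 := by
    rw [inv_pow, ← Complex.ofReal_pow, Real.sq_sqrt (by norm_num : (0:ℝ) ≤ 2)]
    norm_num
  simp [fid, chanOut, maxEnt, dotProduct, mulVec, Matrix.mul_apply, Fintype.sum_prod_type,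
    Fin.sum_univ_succ, Matrix.one_apply, Complex.conj_ofReal]
  ring_nf
  rw [h2]
  ring

lemma psd_smul_vecMulVec {n : Type*} [Fintype n] (r : ℝ) (hr : 0 ≤ r) (v : n → ℂ) :
    (((r:ℂ)) • Matrix.vecMulVec v (star v)).PosSemidef := by
  rw [Matrix.posSemidef_iff_dotProduct_mulVec]
  constructor
  · ext i j
    simp [Matrix.conjTranspose_apply, Matrix.vecMulVec_apply, Complex.conj_ofReal, mul_comm]
  · intro x
    have hmv : (Matrix.vecMulVec v (star v)) *ᵥ x = (star v ⬝ᵥ x) • v := by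
      ext i
      simp [Matrix.mulVec, Matrix.vecMulVec_apply, dotProduct, Finset.mul_sum, mul_assoc,
        mul_comm, mul_left_comm]
    rw [Matrix.smul_mulVec, hmv]
    have key : star x ⬝ᵥ ((r:ℂ) • ((star v ⬝ᵥ x) • v)) =
        (r:ℂ) * (star (star v ⬝ᵥ x) * (star v ⬝ᵥ x)) := by
      simp only [dotProduct, Pi.smul_apply, smul_eq_mul, star_sum, star_mul', Pi.star_apply,
        star_star, Finset.mul_sum, Finset.sum_mul]
      rw [Finset.sum_comm]
      congr 1; ext i
      congr 1; ext j
      ring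
    rw [key]
    exact mul_nonneg (by exact_mod_cast Complex.zero_le_real.2 hr) (star_mul_self_nonneg _)

/-- For the qubit amplitude damping channel with damping probability
`p`, given by Kraus operators `K₀ = [[1,0],[0,√(1−p)]]` and `K₁ = [[0,√p],[0,0]]`, the
maximum entanglement fidelity is `O(N) = 1 − p/2`, and it is attained by the input
density matrix `Λ = v v† / (2 − p)` with `v = vec(K₀) = e₀⊗e₀ + √(1−p)·e₁⊗e₁`. -/
theorem stmt_6 (p : ℝ) (hp0 : 0 ≤ p) (hp1 : p ≤ 1)
    (K : Fin 2 → Matrix (Fin 2) (Fin 2) ℂ)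
    (hK : K = ![!![1, 0; 0, (Real.sqrt (1 - p) : ℂ)], !![0, (Real.sqrt p : ℂ); 0, 0]])
    (v : Fin 2 × Fin 2 → ℂ)
    (hv : v = fun q => if q.1 = 0 ∧ q.2 = 0 then 1
      else if q.1 = 1 ∧ q.2 = 1 then (Real.sqrt (1 - p) : ℂ) else 0)
    (Λ : Matrix (Fin 2 × Fin 2) (Fin 2 × Fin 2) ℂ)
    (hΛ : Λ = (((2 - p : ℝ) : ℂ))⁻¹ • Matrix.vecMulVec v (star v)) :
    IsGreatest (fidSet K) (1 - p / 2) ∧ IsDensity Λ ∧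
      fid K Λ = ((1 - p / 2 : ℝ) : ℂ) := by
  set s : ℝ := Real.sqrt (1 - p) with hsdef
  set t : ℝ := Real.sqrt p with htdef
  have hs : s^2 = 1 - p := Real.sq_sqrt (by linarith)
  have ht : t^2 = p := Real.sq_sqrt hp0
  have hs0 : 0 ≤ s := Real.sqrt_nonneg _
  have h2p : (0:ℝ) < 2 - p := by linarith
  have h2pC : ((2 - p : ℝ) : ℂ) ≠ 0 := by
    exact_mod_cast (Complex.ofReal_ne_zero).2 (ne_of_gt h2p)
  -- entries of Λ
  have hΛe : ∀ q r : Fin 2 × Fin 2, Λ q r = ((2 - p : ℝ) : ℂ)⁻¹ * (v q * star (v r)) := by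
    intro q r
    simp [hΛ, Matrix.vecMulVec_apply, mul_assoc]
  have hv00 : v (0,0) = 1 := by simp [hv]
  have hv11 : v (1,1) = (s:ℂ) := by simp [hv]
  have hv01 : v (0,1) = 0 := by simp [hv]
  have hv10 : v (1,0) = 0 := by simp [hv]
  have hsC : ((s:ℝ):ℂ)^2 = ((1 - p : ℝ):ℂ) := by exact_mod_cast congrArg Complex.ofReal hs
  -- fid K Λ
  have hfidΛ : fid K Λ = ((1 - p / 2 : ℝ) : ℂ) := by
    rw [hK, fid_formula s t]
    rw [hΛe, hΛe, hΛe, hΛe, hΛe, hv00, hv11, hv01]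
    simp only [Complex.conj_ofReal, star_one, RCLike.star_def, map_zero]
    have : (1:ℂ)/2 * (((2 - p : ℝ):ℂ)⁻¹ * (1 * 1) + ↑s * (((2 - p : ℝ):ℂ)⁻¹ * (1 * ↑s))
        + ↑s * (((2 - p : ℝ):ℂ)⁻¹ * (↑s * 1)) + ↑s ^ 2 * (((2 - p : ℝ):ℂ)⁻¹ * (↑s * ↑s))
        + ↑t ^ 2 * (((2 - p : ℝ):ℂ)⁻¹ * (0 * 0)))
        = ((2 - p : ℝ):ℂ)⁻¹ * ((1 + (↑s:ℂ)^2)^2 / 2) := by ring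
    rw [this, hsC]
    have h2pC' : (2 - (p:ℂ)) ≠ 0 := by
      intro h; apply h2pC; push_cast; exact h
    rw [inv_mul_eq_div, div_eq_iff (by push_cast at h2pC ⊢; exact h2pC)]
    push_cast
    ring
  -- Λ is a density matrix
  have hdens : IsDensity Λ := by
    constructor
    · have : Λ = (((2 - p)⁻¹ : ℝ) : ℂ) • Matrix.vecMulVec v (star v) := by
        rw [hΛ, Complex.ofReal_inv]
      rw [this]
      exact psd_smul_vecMulVec _ (le_of_lt (inv_pos.2 h2p)) v
    · have hv00' : v 0 = 1 := by rw [← Prod.mk_zero_zero]; exact hv00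
      have hv11' : v 1 = (s:ℂ) := by rw [← Prod.mk_one_one]; exact hv11
      have : Λ.trace = ((2 - p : ℝ) : ℂ)⁻¹ * (1 + (s:ℂ)^2) := by
        simp [Matrix.trace, Fintype.sum_prod_type, Fin.sum_univ_succ, hΛe, hv00', hv11', hv00, hv11, hv01,
          hv10, Complex.conj_ofReal]
        ring
      rw [this, hsC]
      rw [inv_mul_eq_div, div_eq_one_iff_eq h2pC]
      push_cast
      ring
  refine ⟨⟨⟨Λ, hdens, hfidΛ⟩, ?_⟩, hdens, hfidΛ⟩
  -- upper bound
  rintro x ⟨ρ, ⟨hpsd, htr⟩, hfid⟩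
  have htrρ : ρ (0,0) (0,0) + ρ (0,1) (0,1) + ρ (1,0) (1,0) + ρ (1,1) (1,1) = 1 := by
    have h := htr
    simp only [Matrix.trace, Matrix.diag_apply, Fintype.sum_prod_type, Fin.sum_univ_succ,
      Finset.sum_empty, Fin.sum_univ_zero, add_zero, Fin.succ_zero_eq_one] at h
    linear_combination h
  set a1 : Fin 2 × Fin 2 → ℂ := fun q => if q = (0,0) then (s:ℂ) else if q = (1,1) then -1 else 0
    with ha1
  set e01 : Fin 2 × Fin 2 → ℂ := fun q => if q = (0,1) then 1 else 0 with he01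
  set e10 : Fin 2 × Fin 2 → ℂ := fun q => if q = (1,0) then 1 else 0 with he10
  have q1 := hpsd.dotProduct_mulVec_nonneg a1
  have q2 := hpsd.dotProduct_mulVec_nonneg e01
  have q3 := hpsd.dotProduct_mulVec_nonneg e10
  have hq1 : star a1 ⬝ᵥ ρ *ᵥ a1 = (s:ℂ)^2 * ρ (0,0) (0,0) - s * ρ (0,0) (1,1)
      - s * ρ (1,1) (0,0) + ρ (1,1) (1,1) := by
    simp [ha1, dotProduct, mulVec, Fintype.sum_prod_type, Fin.sum_univ_succ, Prod.ext_iff,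
      Complex.conj_ofReal]
    ring
  have hq2 : star e01 ⬝ᵥ ρ *ᵥ e01 = ρ (0,1) (0,1) := by
    simp [he01, dotProduct, mulVec, Fintype.sum_prod_type, Fin.sum_univ_succ, Prod.ext_iff]
  have hq3 : star e10 ⬝ᵥ ρ *ᵥ e10 = ρ (1,0) (1,0) := by
    simp [he10, dotProduct, mulVec, Fintype.sum_prod_type, Fin.sum_univ_succ, Prod.ext_iff]
  have hfidρ : fid K ρ = (1/2) * (ρ (0,0) (0,0) + s * ρ (0,0) (1,1) + s * ρ (1,1) (0,0)
      + s^2 * ρ (1,1) (1,1) + t^2 * ρ (0,1) (0,1)) := by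
    rw [hK, fid_formula s t]
  have key : ((1 - p/2 - x : ℝ) : ℂ) =
      (1/2) * (star a1 ⬝ᵥ ρ *ᵥ a1) + ((1 - p : ℝ):ℂ) * (star e01 ⬝ᵥ ρ *ᵥ e01)
        + ((1 - p/2 : ℝ):ℂ) * (star e10 ⬝ᵥ ρ *ᵥ e10) := by
    have hsC' : ((s:ℝ):ℂ)^2 = 1 - (p:ℂ) := by
      rw [hsC]; push_cast; ring
    have htC' : ((t:ℝ):ℂ)^2 = (p:ℂ) := by
      exact_mod_cast congrArg Complex.ofReal ht
    have hxf : (x:ℂ) = (1/2) * (ρ (0,0) (0,0) + s * ρ (0,0) (1,1) + s * ρ (1,1) (0,0)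
        + (1 - (p:ℂ)) * ρ (1,1) (1,1) + (p:ℂ) * ρ (0,1) (0,1)) := by
      rw [← hfid, hfidρ, hsC', htC']
    rw [hq1, hq2, hq3, hsC']
    push_cast
    linear_combination (-1 : ℂ) * hxf - (1 - (p:ℂ)/2) * htrρ
  have hnn : (0:ℂ) ≤ ((1 - p/2 - x : ℝ) : ℂ) := by
    rw [key]
    have c1 : (0:ℂ) ≤ (1/2 : ℂ) := by
      rw [show ((1:ℂ)/2) = (((1/2 : ℝ)):ℂ) by norm_num]
      exact Complex.zero_le_real.2 (by norm_num)
    have c2 : (0:ℂ) ≤ ((1 - p : ℝ):ℂ) := Complex.zero_le_real.2 (by linarith)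
    have c3 : (0:ℂ) ≤ ((1 - p/2 : ℝ):ℂ) := Complex.zero_le_real.2 (by linarith)
    exact add_nonneg (add_nonneg (mul_nonneg c1 q1) (mul_nonneg c2 q2)) (mul_nonneg c3 q3)
  have := Complex.zero_le_real.1 hnn
  linarith
end

section
/- Let 0 ≤ b < 1 and 0 < c ≤ 1, and let K₀ = [[√((1+b)(1+c)/(2(1+bc))), 0],[0, √((1−b)(1+c)/(2(1−bc)))]] be the leading standard Kraus operator of the extremal qubit channel N_{b,c}. Let ψ = vec(K₀)/‖vec(K₀)‖ ∈ ℂ²⊗ℂ² be its normalized vectorization (the unique optimal input state of N_{b,c}). Then the reduced density matrix Tr_2(ψψ†) has eigenvalues (1+b)(1−bc)/(2(1−b²c)) and (1−b)(1+bc)/(2(1−b²c)); hence the entanglement of the optimal input is h((1+b)(1−bc)/(2(1−b²c))), where h(x) = −x log₂ x − (1−x) log₂(1−x). -/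
open Matrix

/-- Vectorization of a 2×2 matrix: `vec(K) = Σ_{j,k} K_{kj} e_j ⊗ e_k`. -/
def vec2 (K : Matrix (Fin 2) (Fin 2) ℂ) : Fin 2 × Fin 2 → ℂ := fun q => K q.2 q.1

/-- Partial trace over the second tensor factor:
`(Tr₂ σ)_{j,j'} = Σ_k σ_{(j,k),(j',k)}`. -/
noncomputable def ptrace2 (σ : Matrix (Fin 2 × Fin 2) (Fin 2 × Fin 2) ℂ) :
    Matrix (Fin 2) (Fin 2) ℂ :=
  Matrix.of fun j j' => ∑ k, σ (j, k) (j', k)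

/-- The binary entropy `h(x) = −x log₂ x − (1−x) log₂ (1−x)`. -/
noncomputable def binH (x : ℝ) : ℝ :=
  -(x * Real.logb 2 x) - (1 - x) * Real.logb 2 (1 - x)

/-- The trace of a Hermitian complex matrix is the sum of its eigenvalues. -/
lemma trace_eq_sum_eig {n : Type*} [Fintype n] [DecidableEq n] (A : Matrix n n ℂ)
    (hA : A.IsHermitian) : A.trace = ∑ i, (hA.eigenvalues i : ℂ) := by
  conv_lhs => rw [hA.spectral_theorem]
  rw [Unitary.conjStarAlgAut_apply, Matrix.trace_mul_cycle, Unitary.coe_star_mul_self, Matrix.one_mul, Matrix.trace_diagonal]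
  rfl

/-- The determinant of a Hermitian complex matrix is the product of its eigenvalues. -/
lemma det_eq_prod_eig {n : Type*} [Fintype n] [DecidableEq n] (A : Matrix n n ℂ)
    (hA : A.IsHermitian) : A.det = ∏ i, (hA.eigenvalues i : ℂ) :=
  hA.det_eq_prod_eigenvalues

/-- Let `K₀` be the leading standard Kraus operator of the extremal
qubit channel `N_{b,c}` (`0 ≤ b < 1`, `0 < c ≤ 1`) and let `ψ` be its normalized
vectorization — the unique optimal input state of `N_{b,c}`.  Then `Tr₂(ψψ†)` has
eigenvalues `(1+b)(1−bc)/(2(1−b²c))` and `(1−b)(1+bc)/(2(1−b²c))`; hence the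
entanglement of the optimal input — the von Neumann entropy `−Σ λᵢ log₂ λᵢ` of
`Tr₂(ψψ†)` — equals `h((1+b)(1−bc)/(2(1−b²c)))`. -/
theorem stmt_9 (b c : ℝ) (hb0 : 0 ≤ b) (hb1 : b < 1) (hc0 : 0 < c) (hc1 : c ≤ 1)
    (K₀ : Matrix (Fin 2) (Fin 2) ℂ)
    (hK₀ : K₀ = !![(Real.sqrt ((1 + b) * (1 + c) / (2 * (1 + b * c))) : ℂ), 0;
                   0, (Real.sqrt ((1 - b) * (1 + c) / (2 * (1 - b * c))) : ℂ)])
    (ψ : Fin 2 × Fin 2 → ℂ)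
    (hψ : ψ = ((Real.sqrt (∑ q, Complex.normSq (vec2 K₀ q)) : ℝ) : ℂ)⁻¹ • vec2 K₀) :
    ∃ hH : (ptrace2 (Matrix.vecMulVec ψ (star ψ))).IsHermitian,
      ((hH.eigenvalues 0 = (1 + b) * (1 - b * c) / (2 * (1 - b ^ 2 * c)) ∧
        hH.eigenvalues 1 = (1 - b) * (1 + b * c) / (2 * (1 - b ^ 2 * c))) ∨
       (hH.eigenvalues 0 = (1 - b) * (1 + b * c) / (2 * (1 - b ^ 2 * c)) ∧
        hH.eigenvalues 1 = (1 + b) * (1 - b * c) / (2 * (1 - b ^ 2 * c)))) ∧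
      (-∑ i, hH.eigenvalues i * Real.logb 2 (hH.eigenvalues i))
        = binH ((1 + b) * (1 - b * c) / (2 * (1 - b ^ 2 * c))) := by
  -- positivity facts
  have hbc : b * c < 1 := lt_of_le_of_lt (by nlinarith) hb1
  have hbc0 : 0 ≤ b * c := mul_nonneg hb0 hc0.le
  have h1p : (0:ℝ) < 1 + b * c := by linarith
  have h1m : (0:ℝ) < 1 - b * c := by linarith
  have h2m : (0:ℝ) < 1 - b ^ 2 * c := by nlinarith
  set a2 : ℝ := (1 + b) * (1 + c) / (2 * (1 + b * c)) with ha2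
  set d2 : ℝ := (1 - b) * (1 + c) / (2 * (1 - b * c)) with hd2
  have ha2p : 0 < a2 := by positivity
  have hd2p : 0 < d2 := by
    apply div_pos
    · nlinarith
    · linarith
  set n : ℝ := a2 + d2 with hn
  have hnp : 0 < n := by positivity
  set r1 : ℝ := (1 + b) * (1 - b * c) / (2 * (1 - b ^ 2 * c)) with hr1
  set r2 : ℝ := (1 - b) * (1 + b * c) / (2 * (1 - b ^ 2 * c)) with hr2
  have hr1p : 0 < r1 := by positivity
  have hr2p : 0 < r2 := by
    apply div_pos
    · nlinarith
    · linarith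
  have hsum : r1 + r2 = 1 := by
    rw [hr1, hr2]; field_simp; ring
  have h1 : a2 / n = r1 := by
    rw [hn, ha2, hd2, hr1]
    rw [div_eq_div_iff (by positivity) (by positivity)]
    field_simp
    ring
  have h2 : d2 / n = r2 := by
    rw [hn, ha2, hd2, hr2]
    rw [div_eq_div_iff (by positivity) (by positivity)]
    field_simp
    ring
  -- the squared norm of the vectorization
  have hnsq : (∑ q, Complex.normSq (vec2 K₀ q)) = n := by
    rw [hn, ha2, hd2]
    simp [vec2, hK₀, Fintype.sum_prod_type, Fin.sum_univ_two, Complex.normSq_ofReal]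
    rw [Real.mul_self_sqrt (by positivity), Real.mul_self_sqrt]
    apply div_nonneg
    · nlinarith
    · linarith
  rw [hnsq, hK₀] at hψ
  -- the reduced density matrix is the diagonal matrix `diag(r1, r2)`
  have hM : ptrace2 (Matrix.vecMulVec ψ (star ψ)) = Matrix.diagonal ![(r1:ℂ), (r2:ℂ)] := by
    ext j j'
    fin_cases j <;> fin_cases j' <;>
      simp [ptrace2, Matrix.vecMulVec, hψ, vec2, Fin.sum_univ_two, Matrix.diagonal]
    · rw [← Complex.ofReal_inv, ← Complex.ofReal_mul, ← Complex.ofReal_mul, ← h1]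
      norm_cast
      rw [show (Real.sqrt n)⁻¹ * Real.sqrt a2 * ((Real.sqrt n)⁻¹ * Real.sqrt a2)
          = Real.sqrt a2 * Real.sqrt a2 * (Real.sqrt n * Real.sqrt n)⁻¹ by rw [mul_inv]; ring,
        Real.mul_self_sqrt ha2p.le, Real.mul_self_sqrt hnp.le, ← div_eq_mul_inv]
    · rw [← Complex.ofReal_inv, ← Complex.ofReal_mul, ← Complex.ofReal_mul, ← h2]
      norm_cast
      rw [show (Real.sqrt n)⁻¹ * Real.sqrt d2 * ((Real.sqrt n)⁻¹ * Real.sqrt d2)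
          = Real.sqrt d2 * Real.sqrt d2 * (Real.sqrt n * Real.sqrt n)⁻¹ by rw [mul_inv]; ring,
        Real.mul_self_sqrt hd2p.le, Real.mul_self_sqrt hnp.le, ← div_eq_mul_inv]
  have hH : (ptrace2 (Matrix.vecMulVec ψ (star ψ))).IsHermitian := by
    rw [hM]
    refine Matrix.isHermitian_diagonal_iff.mpr ?_
    intro i
    fin_cases i
    · exact Complex.conj_ofReal r1
    · exact Complex.conj_ofReal r2
  -- trace and determinant give the eigenvalues
  have htr : ∑ i, (hH.eigenvalues i : ℂ) = (r1 : ℂ) + (r2 : ℂ) := by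
    rw [← trace_eq_sum_eig _ hH, hM]
    simp [Matrix.trace_fin_two, Matrix.diagonal]
  have hdet : ∏ i, (hH.eigenvalues i : ℂ) = (r1 : ℂ) * (r2 : ℂ) := by
    rw [← det_eq_prod_eig _ hH, hM]
    simp [Matrix.det_fin_two, Matrix.diagonal]
  have htr' : hH.eigenvalues 0 + hH.eigenvalues 1 = 1 := by
    have hc : ((hH.eigenvalues 0 + hH.eigenvalues 1 : ℝ) : ℂ) = ((r1 + r2 : ℝ) : ℂ) := by
      push_cast
      rw [← Fin.sum_univ_two (f := fun i => (hH.eigenvalues i : ℂ))]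
      exact htr
    have := Complex.ofReal_injective hc
    linarith [hsum]
  have hdet' : hH.eigenvalues 0 * hH.eigenvalues 1 = r1 * r2 := by
    have hc : ((hH.eigenvalues 0 * hH.eigenvalues 1 : ℝ) : ℂ) = ((r1 * r2 : ℝ) : ℂ) := by
      push_cast
      rw [← Fin.prod_univ_two (f := fun i => (hH.eigenvalues i : ℂ))]
      exact hdet
    exact Complex.ofReal_injective hc
  have hfac : (hH.eigenvalues 0 - r1) * (hH.eigenvalues 0 - r2) = 0 := by
    linear_combination hH.eigenvalues 0 * htr' - hdet' - hH.eigenvalues 0 * hsum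
  have hcase : (hH.eigenvalues 0 = r1 ∧ hH.eigenvalues 1 = r2) ∨
      (hH.eigenvalues 0 = r2 ∧ hH.eigenvalues 1 = r1) := by
    rcases mul_eq_zero.mp hfac with h | h
    · left
      have h0 : hH.eigenvalues 0 = r1 := by
        have := sub_eq_zero.mp h; linarith
      exact ⟨h0, by linarith⟩
    · right
      have h0 : hH.eigenvalues 0 = r2 := by
        have := sub_eq_zero.mp h; linarith
      exact ⟨h0, by linarith⟩
  refine ⟨hH, hcase, ?_⟩
  have hr21 : r2 = 1 - r1 := by linarith
  rcases hcase with ⟨e0, e1⟩ | ⟨e0, e1⟩ <;>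
    rw [Fin.sum_univ_two, e0, e1, binH, hr21] <;> ring
end

section
/- Let p₀, p₁, p₂, p₃ ≥ 0 with p₀+p₁+p₂+p₃ = 1, p₀ ≥ p_i for i = 1,2,3, and suppose p₀ = p_j for some j ∈ {1,2,3}. Let N be the qubit Pauli channel N(X) = Σ_{i=0}^{3} p_i σ_i X σ_i†, where σ₀ = I, σ₁ = X_Pauli, σ₂ = Y_Pauli, σ₃ = Z_Pauli. Then there exist unit vectors u, v ∈ ℂ² such that the product input ρ = (u⊗v)(u⊗v)† achieves ⟨φ, ((id⊗N)(ρ)) φ⟩ = p₀ = O(N); i.e., the maximum entanglement fidelity of such a Pauli channel is attained by a separable (product) input. -/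
open Matrix
open scoped Kronecker ComplexOrder

/-- The four Pauli matrices `σ₀ = I, σ₁ = X, σ₂ = Y, σ₃ = Z`. -/
def pauli : Fin 4 → Matrix (Fin 2) (Fin 2) ℂ :=
  ![1, !![0, 1; 1, 0], !![0, -Complex.I; Complex.I, 0], !![1, 0; 0, -1]]

noncomputable def bv (i : Fin 4) : Fin 2 × Fin 2 → ℂ :=
  fun q => (starRingEnd ℂ) (pauli i q.1 q.2) * ((1 / Real.sqrt 2 : ℝ) : ℂ)

lemma hc2 : ((1 / Real.sqrt 2 : ℝ) : ℂ) * ((1 / Real.sqrt 2 : ℝ) : ℂ) = (1/2 : ℂ) := by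
  rw [← Complex.ofReal_mul, div_mul_div_comm, Real.mul_self_sqrt (by norm_num : (0:ℝ) ≤ 2)]
  norm_num

lemma bv_eq (i : Fin 4) :
    ((1 : Matrix (Fin 2) (Fin 2) ℂ) ⊗ₖ pauli i)ᴴ *ᵥ maxEnt (Fin 2) = bv i := by
  ext ⟨a, b⟩
  simp [mulVec, dotProduct, maxEnt, bv, Fintype.sum_prod_type, conjTranspose_apply,
    kroneckerMap_apply, Fin.sum_univ_two, one_apply]
  fin_cases a <;> fin_cases b <;> simp

lemma quad_rewrite {m : Type*} [Fintype m] (M ρ : Matrix m m ℂ) (x : m → ℂ) :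
    star x ⬝ᵥ ((M * ρ * Mᴴ) *ᵥ x) = star (Mᴴ *ᵥ x) ⬝ᵥ (ρ *ᵥ (Mᴴ *ᵥ x)) := by
  rw [Matrix.mul_assoc, ← mulVec_mulVec, dotProduct_mulVec, star_mulVec,
    conjTranspose_conjTranspose, mulVec_mulVec]

lemma mulVec_vecMulVec {m : Type*} [Fintype m] (w y x : m → ℂ) :
    vecMulVec w y *ᵥ x = (y ⬝ᵥ x) • w := by
  ext a
  simp only [mulVec, dotProduct, vecMulVec_apply, Pi.smul_apply, smul_eq_mul, Finset.sum_mul,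
    Finset.mul_sum]
  exact Finset.sum_congr rfl fun _ _ => by ring

lemma hc2' : ((1 / Real.sqrt 2 : ℝ) : ℂ) ^ 2 = (1/2 : ℂ) := by
  rw [sq, hc2]

lemma hs2 : ((Real.sqrt 2 : ℝ) : ℂ) ^ 2 = 2 := by
  rw [← Complex.ofReal_pow, Real.sq_sqrt (by norm_num : (0:ℝ) ≤ 2)]
  norm_num

lemma bv_complete (a b : Fin 2 × Fin 2) :
    ∑ i, (starRingEnd ℂ) (bv i a) * bv i b = if a = b then 1 else 0 := by
  obtain ⟨a1, a2⟩ := a; obtain ⟨b1, b2⟩ := b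
  fin_cases a1 <;> fin_cases a2 <;> fin_cases b1 <;> fin_cases b2 <;>
    simp [bv, pauli, Fin.sum_univ_four, Complex.conj_ofReal, _root_.map_mul, Prod.ext_iff] <;>
    ring_nf <;> norm_num [hs2]

lemma sum_mulVec' {n : Type*} [Fintype n] {ι : Type*} [Fintype ι]
    (M : ι → Matrix n n ℂ) (v : n → ℂ) : (∑ i, M i) *ᵥ v = ∑ i, M i *ᵥ v := by
  ext a
  simp only [mulVec, dotProduct, Finset.sum_apply, Matrix.sum_apply, Finset.sum_mul]
  rw [Finset.sum_comm]

lemma dotProduct_sum' {n : Type*} [Fintype n] {ι : Type*} [Fintype ι]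
    (v : n → ℂ) (w : ι → n → ℂ) : v ⬝ᵥ (∑ i, w i) = ∑ i, v ⬝ᵥ w i := by
  simp only [dotProduct, Finset.sum_apply, Finset.mul_sum]
  rw [Finset.sum_comm]

lemma fid_eq (p : Fin 4 → ℝ) (hp : ∀ i, 0 ≤ p i)
    (K : Fin 4 → Matrix (Fin 2) (Fin 2) ℂ)
    (hK : K = fun i => ((Real.sqrt (p i) : ℝ) : ℂ) • pauli i)
    (ρ : Matrix ((Fin 2) × (Fin 2)) ((Fin 2) × (Fin 2)) ℂ) :
    fid K ρ = ∑ i, ((p i : ℝ) : ℂ) * (star (bv i) ⬝ᵥ ρ *ᵥ bv i) := by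
  subst hK
  simp only [fid, chanOut, sum_mulVec', dotProduct_sum']
  refine Finset.sum_congr rfl fun i _ => ?_
  rw [kronecker_smul, conjTranspose_smul, smul_mul_assoc, mul_smul_comm, smul_mul_assoc,
    smul_smul, smul_mulVec, dotProduct_smul, smul_eq_mul, quad_rewrite, bv_eq]
  congr 1
  rw [Complex.star_def, Complex.conj_ofReal, ← Complex.ofReal_mul,
    Real.mul_self_sqrt (hp i)]

lemma sum_qf (ρ : Matrix (Fin 2 × Fin 2) (Fin 2 × Fin 2) ℂ) :
    ∑ i, star (bv i) ⬝ᵥ ρ *ᵥ bv i = ρ.trace := by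
  have h1 : ∀ i : Fin 4, star (bv i) ⬝ᵥ ρ *ᵥ bv i
      = ∑ a, ∑ b, ρ a b * ((starRingEnd ℂ) (bv i a) * bv i b) := by
    intro i
    simp only [dotProduct, mulVec, Pi.star_apply, Complex.star_def, Finset.mul_sum]
    exact Finset.sum_congr rfl fun a _ => Finset.sum_congr rfl fun b _ => by ring
  simp only [h1]
  rw [Finset.sum_comm]
  have h2 : ∀ a : Fin 2 × Fin 2,
      (∑ i : Fin 4, ∑ b, ρ a b * ((starRingEnd ℂ) (bv i a) * bv i b)) = ρ a a := by
    intro a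
    rw [Finset.sum_comm]
    have h3 : ∀ b, (∑ i : Fin 4, ρ a b * ((starRingEnd ℂ) (bv i a) * bv i b))
        = if a = b then ρ a b else 0 := by
      intro b
      rw [← Finset.mul_sum, bv_complete]
      split <;> simp
    simp [h3]
  simp [h2, Matrix.trace, Matrix.diag]

lemma fid_le (p : Fin 4 → ℝ) (hp : ∀ i, 0 ≤ p i) (hmax : ∀ i, p i ≤ p 0)
    (K : Fin 4 → Matrix (Fin 2) (Fin 2) ℂ)
    (hK : K = fun i => ((Real.sqrt (p i) : ℝ) : ℂ) • pauli i) :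
    ∀ x ∈ fidSet K, x ≤ p 0 := by
  rintro x ⟨ρ, ⟨hPSD, htr⟩, hfid⟩
  set q : Fin 4 → ℂ := fun i => star (bv i) ⬝ᵥ ρ *ᵥ bv i with hq
  have hre : ∀ i, 0 ≤ (q i).re := fun i => (Complex.le_def.mp (hPSD.dotProduct_mulVec_nonneg (bv i))).1
  have hsumq : ∑ i, (q i).re = 1 := by
    have h := sum_qf ρ
    rw [htr] at h
    have := congrArg Complex.re h
    simpa [Complex.re_sum] using this
  have hx : x = ∑ i, p i * (q i).re := by
    rw [fid_eq p hp K hK ρ] at hfid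
    have := congrArg Complex.re hfid.symm
    simpa [Complex.re_sum, Complex.re_ofReal_mul] using this
  rw [hx]
  calc ∑ i, p i * (q i).re ≤ ∑ i, p 0 * (q i).re :=
        Finset.sum_le_sum fun i _ => mul_le_mul_of_nonneg_right (hmax i) (hre i)
    _ = p 0 := by rw [← Finset.mul_sum, hsumq, mul_one]

lemma conj_dot {m : Type*} [Fintype m] (w v : m → ℂ) :
    (starRingEnd ℂ) (star w ⬝ᵥ v) = star v ⬝ᵥ w := by
  simp only [dotProduct, map_sum, _root_.map_mul, Pi.star_apply, Complex.star_def,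
    Complex.conj_conj]
  exact Finset.sum_congr rfl fun k _ => by ring

lemma qf_vecMulVec {m : Type*} [Fintype m] (w v : m → ℂ) :
    star v ⬝ᵥ (vecMulVec w (star w) *ᵥ v) =
      (starRingEnd ℂ) (star w ⬝ᵥ v) * (star w ⬝ᵥ v) := by
  rw [mulVec_vecMulVec, dotProduct_smul, smul_eq_mul, conj_dot, mul_comm]

lemma density_w (u v : Fin 2 → ℂ) (hu : (∑ a, Complex.normSq (u a)) = 1)
    (hv : (∑ a, Complex.normSq (v a)) = 1) :
    IsDensity (Matrix.vecMulVec (fun q : Fin 2 × Fin 2 => u q.1 * v q.2)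
      (star fun q : Fin 2 × Fin 2 => u q.1 * v q.2)) := by
  set w : Fin 2 × Fin 2 → ℂ := fun q => u q.1 * v q.2 with hw
  constructor
  · refine posSemidef_iff_dotProduct_mulVec.mpr ⟨?_, ?_⟩
    · ext a b
      simp only [conjTranspose_apply, vecMulVec_apply, Pi.star_apply, Complex.star_def,
        _root_.map_mul, Complex.conj_conj]
      ring
    · intro x
      rw [qf_vecMulVec]
      rw [mul_comm, Complex.mul_conj]
      exact Complex.zero_le_real.mpr (Complex.normSq_nonneg _)
  · rw [Matrix.trace]
    simp only [Matrix.diag_apply, vecMulVec_apply, Pi.star_apply]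
    have h1 : ∀ q : Fin 2 × Fin 2, w q * star (w q) = ((Complex.normSq (u q.1) : ℝ) : ℂ) *
        ((Complex.normSq (v q.2) : ℝ) : ℂ) := by
      intro q
      simp only [hw, Complex.star_def, _root_.map_mul]
      rw [← Complex.mul_conj, ← Complex.mul_conj]
      ring
    simp only [h1]
    have h2 : (∑ q : Fin 2 × Fin 2,
        ((Complex.normSq (u q.1) : ℝ) : ℂ) * ((Complex.normSq (v q.2) : ℝ) : ℂ))
        = (∑ a, ((Complex.normSq (u a) : ℝ) : ℂ)) * (∑ b, ((Complex.normSq (v b) : ℝ) : ℂ)) := by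
      rw [Finset.sum_mul_sum, Fintype.sum_prod_type]
    rw [h2, ← Complex.ofReal_sum, ← Complex.ofReal_sum, hu, hv]
    norm_num

lemma fid_w (p : Fin 4 → ℝ) (hp : ∀ i, 0 ≤ p i)
    (K : Fin 4 → Matrix (Fin 2) (Fin 2) ℂ)
    (hK : K = fun i => ((Real.sqrt (p i) : ℝ) : ℂ) • pauli i) (w : Fin 2 × Fin 2 → ℂ) :
    fid K (vecMulVec w (star w)) =
      ∑ i, ((p i : ℝ) : ℂ) * ((starRingEnd ℂ) (star w ⬝ᵥ bv i) * (star w ⬝ᵥ bv i)) := by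
  rw [fid_eq p hp K hK]
  simp only [qf_vecMulVec]

lemma hs2p6 : ((Real.sqrt 2 : ℝ) : ℂ) ^ 6 = 8 := by
  have h : ((Real.sqrt 2 : ℝ) : ℂ) ^ 6 = (((Real.sqrt 2 : ℝ) : ℂ) ^ 2) ^ 3 := by ring
  rw [h, hs2]; norm_num

lemma hs2i6 : (((Real.sqrt 2 : ℝ) : ℂ))⁻¹ ^ 6 = 8⁻¹ := by
  rw [inv_pow, hs2p6]

lemma hs2i2 : (((Real.sqrt 2 : ℝ) : ℂ))⁻¹ ^ 2 = 2⁻¹ := by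
  rw [inv_pow, hs2]

/-- For the qubit Pauli channel `N(X) = Σ_i p_i σ_i X σ_i†` with
`p₀ ≥ p_i` and `p₀ = p_j` for some `j ∈ {1,2,3}`, there are unit vectors `u, v ∈ ℂ²`
such that the product input `ρ = (u⊗v)(u⊗v)†` achieves
`⟨φ, ((id⊗N)(ρ)) φ⟩ = p₀ = O(N)`: the maximum entanglement fidelity is attained by a
separable input. -/
theorem stmt_14 (p : Fin 4 → ℝ) (hp : ∀ i, 0 ≤ p i) (hsum : ∑ i, p i = 1)
    (hmax : ∀ i, p i ≤ p 0) (j : Fin 4) (hj : j ≠ 0) (hpj : p 0 = p j)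
    (K : Fin 4 → Matrix (Fin 2) (Fin 2) ℂ)
    (hK : K = fun i => ((Real.sqrt (p i) : ℝ) : ℂ) • pauli i) :
    ∃ u v : Fin 2 → ℂ,
      (∑ a, Complex.normSq (u a)) = 1 ∧ (∑ a, Complex.normSq (v a)) = 1 ∧
      fid K (Matrix.vecMulVec (fun q => u q.1 * v q.2) (star fun q => u q.1 * v q.2))
        = ((p 0 : ℝ) : ℂ) ∧
      IsGreatest (fidSet K) (p 0) := by
  have hub : ∀ x ∈ fidSet K, x ≤ p 0 := fid_le p hp hmax K hK
  have hcr : (1 / Real.sqrt 2 : ℝ) * (1 / Real.sqrt 2 : ℝ) = 1/2 := by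
    rw [div_mul_div_comm, Real.mul_self_sqrt (by norm_num : (0:ℝ) ≤ 2)]
    norm_num
  set c : ℂ := ((1/Real.sqrt 2:ℝ):ℂ) with hc
  fin_cases j
  · exact absurd rfl hj
  · -- j = 1 : X
    have hu : (∑ a, Complex.normSq ((![c, c] : Fin 2 → ℂ) a)) = 1 := by
      simp [Fin.sum_univ_two, hc, Complex.normSq_ofReal, hcr]
      norm_num
    have hfid : fid K (Matrix.vecMulVec
        (fun q : Fin 2 × Fin 2 => (![c, c] : Fin 2 → ℂ) q.1 * (![c, c] : Fin 2 → ℂ) q.2)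
        (star fun q : Fin 2 × Fin 2 => (![c, c] : Fin 2 → ℂ) q.1 * (![c, c] : Fin 2 → ℂ) q.2))
        = ((p 0 : ℝ) : ℂ) := by
      rw [fid_w p hp K hK, Fin.sum_univ_four, show p 1 = p 0 from hpj.symm]
      simp only [hc, bv, pauli, dotProduct, Fintype.sum_prod_type, Fin.sum_univ_two,
        Pi.star_apply, Complex.star_def, _root_.map_mul, Complex.conj_conj, Complex.conj_ofReal,
        Matrix.cons_val, Matrix.cons_val', Matrix.cons_val_zero, Matrix.cons_val_one, Matrix.head_cons,
        Matrix.head_fin_const, Matrix.one_apply, Matrix.cons_val_fin_one, _root_.map_one,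
        _root_.map_zero]
      norm_num
      ring_nf
      norm_num [hs2, hs2i6, hs2i2, hs2p6]
      try ring
    exact ⟨_, _, hu, hu, hfid, ⟨_, density_w _ _ hu hu, hfid⟩, hub⟩
  · -- j = 2 : Y
    have hu : (∑ a, Complex.normSq ((![c, -(Complex.I * c)] : Fin 2 → ℂ) a)) = 1 := by
      simp [Fin.sum_univ_two, hc, Complex.normSq_ofReal, hcr, Complex.normSq_mul]
      norm_num
    have hv : (∑ a, Complex.normSq ((![c, Complex.I * c] : Fin 2 → ℂ) a)) = 1 := by
      simp [Fin.sum_univ_two, hc, Complex.normSq_ofReal, hcr, Complex.normSq_mul]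
      norm_num
    have hfid : fid K (Matrix.vecMulVec
        (fun q : Fin 2 × Fin 2 => (![c, -(Complex.I * c)] : Fin 2 → ℂ) q.1 *
          (![c, Complex.I * c] : Fin 2 → ℂ) q.2)
        (star fun q : Fin 2 × Fin 2 => (![c, -(Complex.I * c)] : Fin 2 → ℂ) q.1 *
          (![c, Complex.I * c] : Fin 2 → ℂ) q.2))
        = ((p 0 : ℝ) : ℂ) := by
      rw [fid_w p hp K hK, Fin.sum_univ_four, show p 2 = p 0 from hpj.symm]
      simp only [hc, bv, pauli, dotProduct, Fintype.sum_prod_type, Fin.sum_univ_two,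
        Pi.star_apply, Complex.star_def, _root_.map_mul, Complex.conj_conj, Complex.conj_ofReal,
        Matrix.cons_val, Matrix.cons_val', Matrix.cons_val_zero, Matrix.cons_val_one, Matrix.head_cons,
        Matrix.head_fin_const, Matrix.one_apply, Matrix.cons_val_fin_one, _root_.map_one,
        _root_.map_zero, map_neg, Complex.conj_I]
      norm_num
      ring_nf
      norm_num [hs2, hs2i6, hs2i2, hs2p6, Complex.I_sq]
      try ring
    exact ⟨_, _, hu, hv, hfid, ⟨_, density_w _ _ hu hv, hfid⟩, hub⟩
  · -- j = 3 : Z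
    have hu : (∑ a, Complex.normSq ((![1, 0] : Fin 2 → ℂ) a)) = 1 := by
      simp [Fin.sum_univ_two]
    have hfid : fid K (Matrix.vecMulVec
        (fun q : Fin 2 × Fin 2 => (![1, 0] : Fin 2 → ℂ) q.1 * (![1, 0] : Fin 2 → ℂ) q.2)
        (star fun q : Fin 2 × Fin 2 => (![1, 0] : Fin 2 → ℂ) q.1 * (![1, 0] : Fin 2 → ℂ) q.2))
        = ((p 0 : ℝ) : ℂ) := by
      rw [fid_w p hp K hK, Fin.sum_univ_four, show p 3 = p 0 from hpj.symm]
      simp only [bv, pauli, dotProduct, Fintype.sum_prod_type, Fin.sum_univ_two,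
        Pi.star_apply, Complex.star_def, _root_.map_mul, Complex.conj_conj, Complex.conj_ofReal,
        Matrix.cons_val, Matrix.cons_val', Matrix.cons_val_zero, Matrix.cons_val_one, Matrix.head_cons,
        Matrix.head_fin_const, Matrix.one_apply, Matrix.cons_val_fin_one, _root_.map_one,
        _root_.map_zero]
      norm_num
      ring_nf
      norm_num [hs2, hs2i6, hs2i2, hs2p6]
      try ring
    exact ⟨_, _, hu, hu, hfid, ⟨_, density_w _ _ hu hu, hfid⟩, hub⟩
end

section
/- Let 2/5 < λ < 1 and let M be the qutrit channel with Kraus operators K₀ = √λ·I₃, K₁ = √(1−λ)·(e₀e₁† + e₁e₀†), K₂ = √(1−λ)·e₁e₂† acting on ℂ³. Then the maximum entanglement fidelity O(M) = λ, and this value is attained by the maximally entangled input ρ = φφ†, where φ = (1/√3) Σ_{a=0}^{2} e_a ⊗ e_a. (Thus M is a non-unital channel whose optimal input is maximally entangled.) -/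
open Matrix
open scoped Kronecker ComplexOrder

/-! ### Auxiliary lemmas -/

lemma aux_sum_mulVec {m ι : Type*} [Fintype m] [Fintype ι] (M : ι → Matrix m m ℂ) (x : m → ℂ) :
    (∑ i, M i) *ᵥ x = ∑ i, M i *ᵥ x := by
  ext j
  rw [Finset.sum_apply]
  simp only [mulVec, dotProduct, Matrix.sum_apply, Finset.sum_mul]
  rw [Finset.sum_comm]

lemma aux_dot_sum {m ι : Type*} [Fintype m] [Fintype ι] (v : m → ℂ) (f : ι → m → ℂ) :
    v ⬝ᵥ (∑ i, f i) = ∑ i, v ⬝ᵥ f i := by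
  simp only [dotProduct, Finset.sum_apply, Finset.mul_sum]
  rw [Finset.sum_comm]

lemma aux_quad_conj {m : Type*} [Fintype m] (B ρ : Matrix m m ℂ) (x : m → ℂ) :
    star x ⬝ᵥ ((B * ρ * Bᴴ) *ᵥ x) = star (Bᴴ *ᵥ x) ⬝ᵥ (ρ *ᵥ (Bᴴ *ᵥ x)) := by
  rw [star_mulVec, conjTranspose_conjTranspose, mulVec_mulVec, dotProduct_mulVec,
    dotProduct_mulVec, vecMul_vecMul, Matrix.mul_assoc]

lemma aux_fid_eq {n : Type*} [Fintype n] [DecidableEq n] {ι : Type*} [Fintype ι]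
    (K : ι → Matrix n n ℂ) (ρ : Matrix (n × n) (n × n) ℂ) :
    fid K ρ = ∑ i, star (((1 : Matrix n n ℂ) ⊗ₖ K i)ᴴ *ᵥ maxEnt n) ⬝ᵥ
      (ρ *ᵥ (((1 : Matrix n n ℂ) ⊗ₖ K i)ᴴ *ᵥ maxEnt n)) := by
  simp only [fid, chanOut, ← aux_quad_conj]
  rw [aux_sum_mulVec, aux_dot_sum]

lemma aux_kron_mulVec_maxEnt (M : Matrix (Fin 3) (Fin 3) ℂ) :
    ((1 : Matrix (Fin 3) (Fin 3) ℂ) ⊗ₖ M)ᴴ *ᵥ maxEnt (Fin 3) =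
      fun p => (starRingEnd ℂ) (M p.1 p.2) * ((1 / Real.sqrt 3 : ℝ) : ℂ) := by
  funext p
  simp [mulVec, dotProduct, maxEnt, Fintype.sum_prod_type, conjTranspose_apply,
    one_apply, apply_ite, mul_ite, ite_mul, Finset.sum_ite_eq, Finset.sum_ite_eq']

lemma aux_w0 (l : ℝ) :
    (fun p : Fin 3 × Fin 3 => (starRingEnd ℂ)
        ((((Real.sqrt l : ℝ) : ℂ) • (1 : Matrix (Fin 3) (Fin 3) ℂ)) p.1 p.2)
        * ((1 / Real.sqrt 3 : ℝ) : ℂ))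
      = fun p => if p.1 = p.2 then ((Real.sqrt l / Real.sqrt 3 : ℝ) : ℂ) else 0 := by
  funext p
  by_cases h : p.1 = p.2 <;>
    simp [h, Matrix.one_apply, Complex.conj_ofReal, div_eq_mul_inv, Complex.ofReal_mul,
      Complex.ofReal_inv]

lemma aux_w1 (l : ℝ) :
    (fun p : Fin 3 × Fin 3 => (starRingEnd ℂ)
        (((((Real.sqrt (1 - l) : ℝ) : ℂ) • (Matrix.single 0 1 (1 : ℂ)
          + Matrix.single 1 0 (1 : ℂ)) : Matrix (Fin 3) (Fin 3) ℂ)) p.1 p.2)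
        * ((1 / Real.sqrt 3 : ℝ) : ℂ))
      = fun p => if p = (0,1) ∨ p = (1,0) then ((Real.sqrt (1-l) / Real.sqrt 3 : ℝ) : ℂ)
          else 0 := by
  funext p
  obtain ⟨a, b⟩ := p
  fin_cases a <;> fin_cases b <;>
    simp [Matrix.single, Complex.conj_ofReal, div_eq_mul_inv, Complex.ofReal_mul,
      Complex.ofReal_inv, Prod.ext_iff]

lemma aux_w2 (l : ℝ) :
    (fun p : Fin 3 × Fin 3 => (starRingEnd ℂ)
        ((((Real.sqrt (1 - l) : ℝ) : ℂ) • Matrix.single 1 2 (1 : ℂ)) p.1 p.2)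
        * ((1 / Real.sqrt 3 : ℝ) : ℂ))
      = fun p => if p = (1,2) then ((Real.sqrt (1-l) / Real.sqrt 3 : ℝ) : ℂ) else 0 := by
  funext p
  obtain ⟨a, b⟩ := p
  fin_cases a <;> fin_cases b <;>
    simp [Matrix.single, Complex.conj_ofReal, div_eq_mul_inv, Complex.ofReal_mul,
      Complex.ofReal_inv, Prod.ext_iff]

lemma aux_quad_diag (μ : ℝ) (ρ : Matrix (Fin 3 × Fin 3) (Fin 3 × Fin 3) ℂ) :
    star (fun p : Fin 3 × Fin 3 => if p.1 = p.2 then ((μ : ℝ) : ℂ) else 0) ⬝ᵥ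
      (ρ *ᵥ (fun p => if p.1 = p.2 then ((μ : ℝ) : ℂ) else 0))
    = ((μ ^ 2 : ℝ) : ℂ) * (∑ a : Fin 3, ∑ b : Fin 3, ρ (a,a) (b,b)) := by
  simp [dotProduct, mulVec, Fintype.sum_prod_type, Fin.sum_univ_three, Prod.ext_iff,
    Complex.conj_ofReal]
  ring

lemma aux_quad_v (μ : ℝ) (ρ : Matrix (Fin 3 × Fin 3) (Fin 3 × Fin 3) ℂ) :
    star (fun p : Fin 3 × Fin 3 => if p = (0,1) ∨ p = (1,0) then ((μ : ℝ) : ℂ) else 0) ⬝ᵥ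
      (ρ *ᵥ (fun p => if p = (0,1) ∨ p = (1,0) then ((μ : ℝ) : ℂ) else 0))
    = ((μ ^ 2 : ℝ) : ℂ) * (ρ (0,1) (0,1) + ρ (0,1) (1,0) + ρ (1,0) (0,1) + ρ (1,0) (1,0)) := by
  simp [dotProduct, mulVec, Fintype.sum_prod_type, Fin.sum_univ_three, Prod.ext_iff,
    Complex.conj_ofReal]
  ring

lemma aux_quad_z (μ : ℝ) (ρ : Matrix (Fin 3 × Fin 3) (Fin 3 × Fin 3) ℂ) :
    star (fun p : Fin 3 × Fin 3 => if p = (1,2) then ((μ : ℝ) : ℂ) else 0) ⬝ᵥ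
      (ρ *ᵥ (fun p => if p = (1,2) then ((μ : ℝ) : ℂ) else 0))
    = ((μ ^ 2 : ℝ) : ℂ) * ρ (1,2) (1,2) := by
  simp [dotProduct, mulVec, Fintype.sum_prod_type, Fin.sum_univ_three, Prod.ext_iff,
    Complex.conj_ofReal]
  ring

lemma aux_fid_formula (l : ℝ) (hl0 : 0 ≤ l) (hl1 : l ≤ 1)
    (K : Fin 3 → Matrix (Fin 3) (Fin 3) ℂ)
    (hK : K = ![((Real.sqrt l : ℝ) : ℂ) • (1 : Matrix (Fin 3) (Fin 3) ℂ),
                ((Real.sqrt (1 - l) : ℝ) : ℂ) •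
                  (Matrix.single 0 1 (1 : ℂ) + Matrix.single 1 0 (1 : ℂ)),
                ((Real.sqrt (1 - l) : ℝ) : ℂ) • Matrix.single 1 2 (1 : ℂ)])
    (ρ : Matrix (Fin 3 × Fin 3) (Fin 3 × Fin 3) ℂ) :
    fid K ρ = ((l / 3 : ℝ) : ℂ) * (∑ a : Fin 3, ∑ b : Fin 3, ρ (a,a) (b,b))
      + (((1 - l) / 3 : ℝ) : ℂ) *
        (ρ (0,1) (0,1) + ρ (0,1) (1,0) + ρ (1,0) (0,1) + ρ (1,0) (1,0) + ρ (1,2) (1,2)) := by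
  subst hK
  rw [aux_fid_eq, Fin.sum_univ_three]
  simp only [Matrix.cons_val_zero, Matrix.cons_val_one, Matrix.head_cons, Matrix.cons_val_two,
    Matrix.tail_cons]
  rw [aux_kron_mulVec_maxEnt, aux_kron_mulVec_maxEnt, aux_kron_mulVec_maxEnt]
  rw [aux_w0 l, aux_w1 l, aux_w2 l]
  rw [aux_quad_diag, aux_quad_v, aux_quad_z]
  have h1 : (Real.sqrt l / Real.sqrt 3) ^ 2 = l / 3 := by
    rw [div_pow, Real.sq_sqrt hl0, Real.sq_sqrt (by norm_num : (0:ℝ) ≤ 3)]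
  have h2 : (Real.sqrt (1 - l) / Real.sqrt 3) ^ 2 = (1 - l) / 3 := by
    rw [div_pow, Real.sq_sqrt (by linarith), Real.sq_sqrt (by norm_num : (0:ℝ) ≤ 3)]
  rw [h1, h2]
  ring

lemma aux_base {m : Type*} [Fintype m] [DecidableEq m] (ρ : Matrix m m ℂ) (a b : m) :
    star (Pi.single a (1:ℂ)) ⬝ᵥ (ρ *ᵥ Pi.single b (1:ℂ)) = ρ a b := by
  simp [dotProduct, mulVec, Pi.single_apply, apply_ite, mul_ite, ite_mul,
    Finset.sum_ite_eq, Finset.sum_ite_eq']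

lemma aux_diag_nonneg {m : Type*} [Fintype m] [DecidableEq m] {ρ : Matrix m m ℂ}
    (hρ : ρ.PosSemidef) (p : m) : 0 ≤ ρ p p := by
  have h := hρ.dotProduct_mulVec_nonneg (Pi.single p 1)
  rwa [aux_base] at h

lemma aux_pair {m : Type*} [Fintype m] [DecidableEq m] {ρ : Matrix m m ℂ}
    (hρ : ρ.PosSemidef) (p q : m) :
    0 ≤ ρ p p + ρ q q - ρ p q - ρ q p := by
  have h := hρ.dotProduct_mulVec_nonneg (Pi.single p 1 - Pi.single q 1)
  rw [star_sub, mulVec_sub, sub_dotProduct, dotProduct_sub, dotProduct_sub,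
    aux_base, aux_base, aux_base, aux_base] at h
  have e : ρ p p - ρ p q - (ρ q p - ρ q q) = ρ p p + ρ q q - ρ p q - ρ q p := by ring
  rwa [e] at h

lemma aux_density : (Matrix.vecMulVec (maxEnt (Fin 3)) (star (maxEnt (Fin 3)))).PosSemidef ∧
    (Matrix.vecMulVec (maxEnt (Fin 3)) (star (maxEnt (Fin 3)))).trace = 1 := by
  constructor
  · refine Matrix.PosSemidef.of_dotProduct_mulVec_nonneg ?_ ?_
    · ext p q
      simp [conjTranspose_apply, vecMulVec_apply, Pi.star_apply, mul_comm]
    · intro x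
      have h : Matrix.vecMulVec (maxEnt (Fin 3)) (star (maxEnt (Fin 3))) *ᵥ x
          = (star (maxEnt (Fin 3)) ⬝ᵥ x) • maxEnt (Fin 3) := by
        ext p
        simp [mulVec, vecMulVec_apply, dotProduct, Finset.mul_sum, Pi.smul_apply,
          smul_eq_mul, Finset.sum_mul]
        apply Finset.sum_congr rfl
        intro q _
        ring
      rw [h]
      have h2 : star x ⬝ᵥ ((star (maxEnt (Fin 3)) ⬝ᵥ x) • maxEnt (Fin 3))
          = (star (maxEnt (Fin 3)) ⬝ᵥ x) * (star x ⬝ᵥ maxEnt (Fin 3)) := by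
        simp [dotProduct, Finset.mul_sum, Pi.smul_apply, smul_eq_mul]
        apply Finset.sum_congr rfl
        intro q _
        ring
      rw [h2]
      have h3 : star x ⬝ᵥ maxEnt (Fin 3) = (starRingEnd ℂ) (star (maxEnt (Fin 3)) ⬝ᵥ x) := by
        simp [dotProduct, map_sum]
        apply Finset.sum_congr rfl
        intro q _
        simp [mul_comm]
      rw [h3, Complex.mul_conj]
      exact Complex.zero_le_real.mpr (Complex.normSq_nonneg _)
  · have h : ∀ p : Fin 3 × Fin 3, Matrix.vecMulVec (maxEnt (Fin 3)) (star (maxEnt (Fin 3))) p p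
        = maxEnt (Fin 3) p * (starRingEnd ℂ) (maxEnt (Fin 3) p) := by
      intro p; simp [vecMulVec_apply]
    simp only [Matrix.trace, Matrix.diag, h]
    rw [Fintype.sum_prod_type]
    simp [maxEnt, Fin.sum_univ_three, Complex.conj_ofReal]
    have : ((Real.sqrt 3 : ℂ))⁻¹ * ((Real.sqrt 3 : ℂ))⁻¹ = (3 : ℂ)⁻¹ := by
      rw [← mul_inv]
      norm_cast
      rw [Real.mul_self_sqrt (by norm_num : (0:ℝ) ≤ 3)]
      norm_num
    rw [this]
    norm_num

lemma aux_value (l : ℝ) (ρ : Matrix (Fin 3 × Fin 3) (Fin 3 × Fin 3) ℂ)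
    (hρ : ρ = Matrix.vecMulVec (maxEnt (Fin 3)) (star (maxEnt (Fin 3)))) :
    ((l / 3 : ℝ) : ℂ) * (∑ a : Fin 3, ∑ b : Fin 3, ρ (a,a) (b,b))
      + (((1 - l) / 3 : ℝ) : ℂ) *
        (ρ (0,1) (0,1) + ρ (0,1) (1,0) + ρ (1,0) (0,1) + ρ (1,0) (1,0) + ρ (1,2) (1,2))
      = ((l : ℝ) : ℂ) := by
  subst hρ
  simp only [vecMulVec_apply, Pi.star_apply]
  simp [maxEnt, Fin.sum_univ_three, Complex.conj_ofReal]
  have hc : ((Real.sqrt 3 : ℂ))⁻¹ * ((Real.sqrt 3 : ℂ))⁻¹ = (3 : ℂ)⁻¹ := by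
    rw [← mul_inv]; norm_cast
    rw [Real.mul_self_sqrt (by norm_num : (0:ℝ) ≤ 3)]; norm_num
  ring_nf
  rw [show ((Real.sqrt 3 : ℂ))⁻¹ ^ 2 = ((Real.sqrt 3 : ℂ))⁻¹ * ((Real.sqrt 3 : ℂ))⁻¹ by ring, hc]
  ring

lemma aux_bound (l x : ℝ) (hl0 : 2/5 < l) (hl1 : l < 1)
    (ρ : Matrix (Fin 3 × Fin 3) (Fin 3 × Fin 3) ℂ)
    (hdiag : ∀ p, 0 ≤ (ρ p p).re)
    (hpair : ∀ p q, (ρ p q).re + (ρ q p).re ≤ (ρ p p).re + (ρ q q).re)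
    (htr : ρ.trace = 1)
    (hf : ((l / 3 : ℝ) : ℂ) * (∑ a : Fin 3, ∑ b : Fin 3, ρ (a,a) (b,b))
      + (((1 - l) / 3 : ℝ) : ℂ) *
        (ρ (0,1) (0,1) + ρ (0,1) (1,0) + ρ (1,0) (0,1) + ρ (1,0) (1,0) + ρ (1,2) (1,2))
      = (x : ℂ)) :
    x ≤ l := by
  have htr' : (ρ ((0:Fin 3),(0:Fin 3)) (0,0)).re + (ρ ((0:Fin 3),(1:Fin 3)) (0,1)).re
      + (ρ ((0:Fin 3),(2:Fin 3)) (0,2)).re + (ρ ((1:Fin 3),(0:Fin 3)) (1,0)).re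
      + (ρ ((1:Fin 3),(1:Fin 3)) (1,1)).re + (ρ ((1:Fin 3),(2:Fin 3)) (1,2)).re
      + (ρ ((2:Fin 3),(0:Fin 3)) (2,0)).re + (ρ ((2:Fin 3),(1:Fin 3)) (2,1)).re
      + (ρ ((2:Fin 3),(2:Fin 3)) (2,2)).re = 1 := by
    have h := congrArg Complex.re htr
    rw [Matrix.trace] at h
    rw [Fintype.sum_prod_type] at h
    simp only [Fin.sum_univ_three, Matrix.diag_apply, Complex.add_re, Complex.one_re] at h
    linarith
  have hx : x = (l/3) * (((ρ (0,0) (0,0)).re + (ρ (0,0) (1,1)).re + (ρ (0,0) (2,2)).re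
      + (ρ (1,1) (0,0)).re + (ρ (1,1) (1,1)).re + (ρ (1,1) (2,2)).re
      + (ρ (2,2) (0,0)).re + (ρ (2,2) (1,1)).re + (ρ (2,2) (2,2)).re))
      + ((1-l)/3) * ((ρ (0,1) (0,1)).re + (ρ (0,1) (1,0)).re + (ρ (1,0) (0,1)).re
      + (ρ (1,0) (1,0)).re + (ρ (1,2) (1,2)).re) := by
    have h := congrArg Complex.re hf
    simp only [Fin.sum_univ_three, Complex.add_re, Complex.re_ofReal_mul,
      Complex.ofReal_re] at h
    linarith
  have p1 := hpair (0,0) (1,1)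
  have p2 := hpair (0,0) (2,2)
  have p3 := hpair (1,1) (2,2)
  have p4 := hpair (0,1) (1,0)
  have d1 := hdiag (0,0); have d2 := hdiag (1,1); have d3 := hdiag (2,2)
  have d4 := hdiag (0,1); have d5 := hdiag (1,0); have d6 := hdiag (1,2)
  have d7 := hdiag (0,2); have d8 := hdiag (2,0); have d9 := hdiag (2,1)
  nlinarith [mul_nonneg (by linarith : (0:ℝ) ≤ l) d7,
    mul_nonneg (by linarith : (0:ℝ) ≤ l) d8,
    mul_nonneg (by linarith : (0:ℝ) ≤ l) d9,
    mul_nonneg (by linarith : (0:ℝ) ≤ (5*l-2)/3) d4,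
    mul_nonneg (by linarith : (0:ℝ) ≤ (5*l-2)/3) d5,
    mul_nonneg (by linarith : (0:ℝ) ≤ (4*l-1)/3) d6,
    mul_nonneg (by linarith : (0:ℝ) ≤ l/3) (by linarith [p1, p2, p3] :
      (0:ℝ) ≤ 3*((ρ (0,0) (0,0)).re + (ρ (1,1) (1,1)).re + (ρ (2,2) (2,2)).re)
        - ((ρ (0,0) (0,0)).re + (ρ (0,0) (1,1)).re + (ρ (0,0) (2,2)).re
      + (ρ (1,1) (0,0)).re + (ρ (1,1) (1,1)).re + (ρ (1,1) (2,2)).re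
      + (ρ (2,2) (0,0)).re + (ρ (2,2) (1,1)).re + (ρ (2,2) (2,2)).re)),
    mul_nonneg (by linarith : (0:ℝ) ≤ (1-l)/3) (by linarith [p4] :
      (0:ℝ) ≤ 2*((ρ (0,1) (0,1)).re + (ρ (1,0) (1,0)).re) + (ρ (1,2) (1,2)).re
        - ((ρ (0,1) (0,1)).re + (ρ (0,1) (1,0)).re + (ρ (1,0) (0,1)).re
      + (ρ (1,0) (1,0)).re + (ρ (1,2) (1,2)).re))]

/-- For `2/5 < λ < 1`, the qutrit channel with Kraus operators
`K₀ = √λ·I₃`, `K₁ = √(1−λ)·(e₀e₁† + e₁e₀†)`, `K₂ = √(1−λ)·e₁e₂†` has maximum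
entanglement fidelity `O(M) = λ`, attained by the maximally entangled input `ρ = φφ†`.
(Thus `M` is a non-unital channel whose optimal input is maximally entangled.) -/
theorem stmt_16 (l : ℝ) (hl0 : 2 / 5 < l) (hl1 : l < 1)
    (K : Fin 3 → Matrix (Fin 3) (Fin 3) ℂ)
    (hK : K = ![((Real.sqrt l : ℝ) : ℂ) • (1 : Matrix (Fin 3) (Fin 3) ℂ),
                ((Real.sqrt (1 - l) : ℝ) : ℂ) •
                  (Matrix.single 0 1 (1 : ℂ) + Matrix.single 1 0 (1 : ℂ)),
                ((Real.sqrt (1 - l) : ℝ) : ℂ) • Matrix.single 1 2 (1 : ℂ)]) :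
    fid K (Matrix.vecMulVec (maxEnt (Fin 3)) (star (maxEnt (Fin 3)))) = ((l : ℝ) : ℂ) ∧
      IsGreatest (fidSet K) l := by
  have hl0' : (0:ℝ) ≤ l := by linarith
  have hl1' : l ≤ 1 := le_of_lt hl1
  have hval : fid K (Matrix.vecMulVec (maxEnt (Fin 3)) (star (maxEnt (Fin 3)))) = ((l:ℝ):ℂ) := by
    rw [aux_fid_formula l hl0' hl1' K hK]
    exact aux_value l _ rfl
  refine ⟨hval, ⟨Matrix.vecMulVec (maxEnt (Fin 3)) (star (maxEnt (Fin 3))),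
    ⟨aux_density.1, aux_density.2⟩, hval⟩, ?_⟩
  rintro x ⟨ρ, ⟨hpsd, htr⟩, hf⟩
  rw [aux_fid_formula l hl0' hl1' K hK ρ] at hf
  have hdiag : ∀ p, 0 ≤ (ρ p p).re := by
    intro p
    have h := aux_diag_nonneg hpsd p
    rw [Complex.le_def] at h
    simpa using h.1
  have hpair : ∀ p q, (ρ p q).re + (ρ q p).re ≤ (ρ p p).re + (ρ q q).re := by
    intro p q
    have h := aux_pair hpsd p q
    rw [Complex.le_def] at h
    have := h.1
    simp only [Complex.zero_re, Complex.sub_re, Complex.add_re] at this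
    linarith
  exact aux_bound l x hl0 hl1 ρ hdiag hpair htr hf
end

section
/- The subspace of ℂ³⊗ℂ³ spanned by the three vectors w₀ = e₀⊗e₁ + e₁⊗e₀, w₁ = e₁⊗e₂ + e₂⊗e₁, and w₂ = e₀⊗e₂ + e₂⊗e₀ is completely entangled: it contains no nonzero product vector. That is, for all u, v ∈ ℂ³, if u⊗v lies in the span of {w₀, w₁, w₂}, then u⊗v = 0. -/
/-- The tensor (Kronecker) product of two vectors in `ℂ³`, as an element of
`ℂ³ ⊗ ℂ³ ≅ ℂ⁹` indexed by pairs. -/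
def tensorVec (u v : Fin 3 → ℂ) : Fin 3 × Fin 3 → ℂ := fun q => u q.1 * v q.2

/-- `w₀ = e₀⊗e₁ + e₁⊗e₀`. -/
def w0 : Fin 3 × Fin 3 → ℂ := fun q => if (q.1 = 0 ∧ q.2 = 1) ∨ (q.1 = 1 ∧ q.2 = 0) then 1 else 0

/-- `w₁ = e₁⊗e₂ + e₂⊗e₁`. -/
def w1 : Fin 3 × Fin 3 → ℂ := fun q => if (q.1 = 1 ∧ q.2 = 2) ∨ (q.1 = 2 ∧ q.2 = 1) then 1 else 0

/-- `w₂ = e₀⊗e₂ + e₂⊗e₀`. -/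
def w2 : Fin 3 × Fin 3 → ℂ := fun q => if (q.1 = 0 ∧ q.2 = 2) ∨ (q.1 = 2 ∧ q.2 = 0) then 1 else 0

/-- The subspace of `ℂ³⊗ℂ³` spanned by `w₀, w₁, w₂` is completely
entangled: it contains no nonzero product vector `u⊗v`. -/
theorem stmt_18 :
    ∀ u v : Fin 3 → ℂ,
      tensorVec u v ∈ Submodule.span ℂ ({w0, w1, w2} : Set (Fin 3 × Fin 3 → ℂ)) →
      tensorVec u v = 0 := by
  intro u v hm
  obtain ⟨a, t, ht, h⟩ := Submodule.mem_span_insert.mp hm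
  obtain ⟨b, s, hs, h2⟩ := Submodule.mem_span_insert.mp ht
  obtain ⟨c, h3⟩ := Submodule.mem_span_singleton.mp hs
  have key : ∀ q, tensorVec u v q = a * w0 q + (b * w1 q + c * w2 q) := by
    intro q
    rw [h, h2, ← h3]
    simp [Pi.add_apply]
  have h00 := key (0, 0)
  have h11 := key (1, 1)
  have h22 := key (2, 2)
  have h01 := key (0, 1)
  have h10 := key (1, 0)
  have h12 := key (1, 2)
  have h21 := key (2, 1)
  have h02 := key (0, 2)
  have h20 := key (2, 0)
  simp [tensorVec, w0, w1, w2] at h00 h11 h22 h01 h10 h12 h21 h02 h20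
  have ha : a = 0 := by
    rcases h00 with h | h
    · rw [← h01, h, zero_mul]
    · rw [← h10, h, mul_zero]
  have hb : b = 0 := by
    rcases h11 with h | h
    · rw [← h12, h, zero_mul]
    · rw [← h21, h, mul_zero]
  have hc : c = 0 := by
    rcases h00 with h | h
    · rw [← h02, h, zero_mul]
    · rw [← h20, h, mul_zero]
  funext q
  rw [Pi.zero_apply, key q, ha, hb, hc]
  ring
end

section
/- Let N : M_2(ℂ) → M_2(ℂ) be a qubit channel with Kraus operators {K_i}, and suppose the largest eigenvalue λ_max of its Choi matrix J^N (a 4×4 positive semidefinite matrix) has multiplicity at least 2. Then the maximum entanglement fidelity O(N) = λ_max/2 can be attained by a separable input: there exist unit vectors u, v ∈ ℂ² such that ⟨φ, ((id⊗N)((u⊗v)(u⊗v)†)) φ⟩ = λ_max/2 = O(N). -/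
open Matrix
open scoped Kronecker ComplexOrder

/-! ### Auxiliary lemmas -/


lemma choi_apply' {ι : Type*} [Fintype ι] (K : ι → Matrix (Fin 2) (Fin 2) ℂ)
    (P Q : Fin 2 × Fin 2) :
    choi K P Q = ∑ i, K i P.2 P.1 * starRingEnd ℂ (K i Q.2 Q.1) := by
  obtain ⟨P1, P2⟩ := P
  obtain ⟨Q1, Q2⟩ := Q
  simp only [choi, of_apply, Matrix.sum_apply, Matrix.mul_apply, Matrix.single,
    conjTranspose_apply, of_apply, Fin.sum_univ_two]
  refine Finset.sum_congr rfl fun i _ => ?_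
  fin_cases P1 <;> fin_cases Q1 <;> simp [mul_comm]

lemma fid_eq_s19 {ι : Type*} [Fintype ι] (K : ι → Matrix (Fin 2) (Fin 2) ℂ)
    (ρ : Matrix (Fin 2 × Fin 2) (Fin 2 × Fin 2) ℂ) :
    fid K ρ = (1/2) * ∑ p : Fin 2 × Fin 2, ∑ q : Fin 2 × Fin 2,
      ρ p q * ∑ i, K i p.1 p.2 * starRingEnd ℂ (K i q.1 q.2) := by
  set c : ℂ := ((1 / Real.sqrt 2 : ℝ) : ℂ) with hc
  set ψ : Fin 2 × Fin 2 → ℂ := fun p => if p.1 = p.2 then 1 else 0 with hψ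
  have hME : maxEnt (Fin 2) = c • ψ := by
    funext p; simp [maxEnt, hψ, hc]
  have hcc : c * c = 1/2 := by
    rw [hc, ← Complex.ofReal_mul, div_mul_div_comm, one_mul,
      Real.mul_self_sqrt (by norm_num)]
    norm_num
  have hM : ∀ M : Matrix (Fin 2 × Fin 2) (Fin 2 × Fin 2) ℂ,
      star (maxEnt (Fin 2)) ⬝ᵥ (M *ᵥ maxEnt (Fin 2))
        = (1/2) * (star ψ ⬝ᵥ (M *ᵥ ψ)) := by
    intro M
    have hstar : star c = c := by rw [hc, Complex.star_def, Complex.conj_ofReal]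
    rw [hME, mulVec_smul, dotProduct_smul, star_smul, smul_dotProduct, smul_smul, smul_eq_mul,
      hstar, hcc]
  have expand : ∀ f : ι → Matrix (Fin 2 × Fin 2) (Fin 2 × Fin 2) ℂ,
      star ψ ⬝ᵥ ((∑ i, f i) *ᵥ ψ) = ∑ i, star ψ ⬝ᵥ (f i *ᵥ ψ) := by
    intro f
    simp only [dotProduct, mulVec, Matrix.sum_apply, Finset.sum_mul, Finset.mul_sum]
    refine Eq.trans (Finset.sum_congr rfl fun p _ => Finset.sum_comm) ?_
    exact Finset.sum_comm
  have key : ∀ i, star ψ ⬝ᵥ ((((1 : Matrix (Fin 2) (Fin 2) ℂ) ⊗ₖ K i) * ρ *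
        ((1 : Matrix (Fin 2) (Fin 2) ℂ) ⊗ₖ K i)ᴴ) *ᵥ ψ)
      = ∑ p : Fin 2 × Fin 2, ∑ q : Fin 2 × Fin 2,
        ρ p q * (K i p.1 p.2 * starRingEnd ℂ (K i q.1 q.2)) := by
    intro i
    simp only [dotProduct, mulVec, Matrix.mul_apply, kroneckerMap_apply, conjTranspose_apply,
      hψ, Pi.star_apply, star_apply, one_apply, Fintype.sum_prod_type, Fin.sum_univ_two]
    norm_num
    ring
  unfold fid chanOut
  rw [hM, expand]
  simp_rw [key, Finset.mul_sum]
  exact Finset.sum_comm.trans (Finset.sum_congr rfl fun p _ => Finset.sum_comm)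

lemma rank1_entries (a b c d : ℂ) (hdet : a * d = b * c)
    (hnz : ¬(a = 0 ∧ b = 0 ∧ c = 0 ∧ d = 0)) :
    ∃ u v : Fin 2 → ℂ, u ≠ 0 ∧ v ≠ 0 ∧
      a = u 0 * v 0 ∧ b = u 0 * v 1 ∧ c = u 1 * v 0 ∧ d = u 1 * v 1 := by
  by_cases hrow : a = 0 ∧ b = 0
  · obtain ⟨ha, hb⟩ := hrow
    refine ⟨![0,1], ![c, d], ?_, ?_, by simp [ha], by simp [hb], by simp, by simp⟩
    · intro h; have := congrFun h 1; simp at this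
    · intro h
      have h0 := congrFun h 0; have h1 := congrFun h 1
      simp at h0 h1
      exact hnz ⟨ha, hb, h0, h1⟩
  · by_cases h00 : a = 0
    · have h01 : b ≠ 0 := fun h => hrow ⟨h00, h⟩
      have h10 : c = 0 := by
        rw [h00, zero_mul] at hdet
        rcases mul_eq_zero.mp hdet.symm with h | h
        · exact absurd h h01
        · exact h
      refine ⟨![1, d / b], ![a, b], ?_, ?_, by simp, by simp, ?_, ?_⟩
      · intro h; have := congrFun h 0; simp at this
      · intro h; have := congrFun h 1; simp at this; exact h01 this
      · simp [h00, h10]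
      · simp; field_simp
    · refine ⟨![1, c / a], ![a, b], ?_, ?_, by simp, by simp, ?_, ?_⟩
      · intro h; have := congrFun h 0; simp at this
      · intro h; have := congrFun h 0; simp at this; exact h00 this
      · simp; field_simp
      · simp; rw [div_mul_eq_mul_div, eq_div_iff h00]; linear_combination hdet

lemma rank1_decomp (Y : Fin 2 × Fin 2 → ℂ)
    (hdet : Y (0,0) * Y (1,1) = Y (0,1) * Y (1,0))
    (hnz : ∃ p, Y p ≠ 0) :
    ∃ u v : Fin 2 → ℂ, u ≠ 0 ∧ v ≠ 0 ∧ ∀ p, Y p = u p.1 * v p.2 := by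
  have hnz' : ¬(Y (0,0) = 0 ∧ Y (0,1) = 0 ∧ Y (1,0) = 0 ∧ Y (1,1) = 0) := by
    rintro ⟨h1, h2, h3, h4⟩
    obtain ⟨⟨pa, pb⟩, hp⟩ := hnz
    apply hp
    fin_cases pa <;> fin_cases pb <;> assumption
  obtain ⟨u, v, hu, hv, e1, e2, e3, e4⟩ := rank1_entries _ _ _ _ hdet hnz'
  exact ⟨u, v, hu, hv, by rintro ⟨pa, pb⟩; fin_cases pa <;> fin_cases pb <;> assumption⟩

lemma quad_root (d1 m d2 : ℂ) :
    ∃ s t : ℂ, ¬(s = 0 ∧ t = 0) ∧ d1 * s^2 + m * (s*t) + d2 * t^2 = 0 := by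
  by_cases h1 : d1 = 0
  · exact ⟨1, 0, by simp, by simp [h1]⟩
  · obtain ⟨z, hz⟩ := IsAlgClosed.exists_pow_nat_eq (k := ℂ) (m^2 - 4*d1*d2) two_pos
    refine ⟨(-m + z)/(2*d1), 1, by simp, ?_⟩
    field_simp
    linear_combination hz

/-- If the largest eigenvalue `λ_max` of the Choi matrix of a qubit
channel `N` has multiplicity at least `2`, then the maximum entanglement fidelity
`O(N) = λ_max/2` is attained by a separable input: there are unit vectors `u, v ∈ ℂ²`
with `⟨φ, ((id⊗N)((u⊗v)(u⊗v)†)) φ⟩ = λ_max/2 = O(N)`. -/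
theorem stmt_19 {ι : Type*} [Fintype ι]
    (K : ι → Matrix (Fin 2) (Fin 2) ℂ)
    (hK : ∑ i, (K i)ᴴ * K i = 1)
    (hJ : (choi K).IsHermitian)
    (hdeg : 2 ≤ (Finset.univ.filter
      fun q => hJ.eigenvalues q = ⨆ p, hJ.eigenvalues p).card) :
    ∃ u v : Fin 2 → ℂ,
      (∑ a, Complex.normSq (u a)) = 1 ∧ (∑ a, Complex.normSq (v a)) = 1 ∧
      fid K (Matrix.vecMulVec (fun q => u q.1 * v q.2) (star fun q => u q.1 * v q.2))
        = ((((⨆ p, hJ.eigenvalues p) / 2 : ℝ)) : ℂ) ∧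
      IsGreatest (fidSet K) ((⨆ p, hJ.eigenvalues p) / 2) := by
  classical
  set lam : ℝ := ⨆ p, hJ.eigenvalues p with hlam
  obtain ⟨k1, hk1m, k2, hk2m, hk12⟩ :=
    Finset.one_lt_card.mp (lt_of_lt_of_le one_lt_two hdeg)
  rw [Finset.mem_filter] at hk1m hk2m
  have hk1 : hJ.eigenvalues k1 = lam := hk1m.2
  have hk2 : hJ.eigenvalues k2 = lam := hk2m.2
  have hle : ∀ k, hJ.eigenvalues k ≤ lam := fun k =>
    le_ciSup (Set.Finite.bddAbove (Set.finite_range _)) k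
  -- eigenvector facts
  have F1 : ∀ P Q, choi K P Q = ∑ k, (hJ.eigenvalues k : ℂ) * hJ.eigenvectorBasis k P
      * starRingEnd ℂ (hJ.eigenvectorBasis k Q) := by
    intro P Q
    conv_lhs => rw [hJ.spectral_theorem]
    simp [Matrix.mul_apply, diagonal_apply, star_apply, Finset.sum_ite_eq, mul_comm, mul_assoc,
      RCLike.star_def]
  have F2 : ∀ k l, (∑ P, starRingEnd ℂ (hJ.eigenvectorBasis k P) * hJ.eigenvectorBasis l P)
      = if k = l then 1 else 0 := by
    intro k l
    have h := hJ.eigenvectorBasis.orthonormal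
    rw [orthonormal_iff_ite] at h
    have := h k l
    rw [PiLp.inner_apply] at this
    simpa [RCLike.inner_apply, mul_comm] using this
  have F3 : ∀ P Q, (∑ k, hJ.eigenvectorBasis k P * starRingEnd ℂ (hJ.eigenvectorBasis k Q))
      = if P = Q then 1 else 0 := by
    intro P Q
    have h : (hJ.eigenvectorUnitary : Matrix (Fin 2 × Fin 2) (Fin 2 × Fin 2) ℂ) *
        star (hJ.eigenvectorUnitary : Matrix (Fin 2 × Fin 2) (Fin 2 × Fin 2) ℂ) = 1 := by
      simpa using (Matrix.mem_unitaryGroup_iff).mp (hJ.eigenvectorUnitary).2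
    have := congrFun (congrFun h P) Q
    simp only [Matrix.mul_apply, star_apply, Matrix.one_apply,
      IsHermitian.eigenvectorUnitary_apply, RCLike.star_def] at this
    simpa using this
  set x : (Fin 2 × Fin 2) → (Fin 2 × Fin 2) → ℂ :=
    fun k p => starRingEnd ℂ (hJ.eigenvectorBasis k p.swap) with hx
  have G2 : ∀ k l, (∑ p, starRingEnd ℂ (x k p) * x l p) = if k = l then 1 else 0 := by
    intro k l
    have : (∑ p : Fin 2 × Fin 2, starRingEnd ℂ (x k p) * x l p)
        = starRingEnd ℂ (∑ P, starRingEnd ℂ (hJ.eigenvectorBasis k P) *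
            hJ.eigenvectorBasis l P) := by
      rw [map_sum]
      exact Fintype.sum_equiv (Equiv.prodComm (Fin 2) (Fin 2)) _ _ (fun p => by
        simp [hx])
    rw [this, F2]
    split <;> simp
  have G3 : ∀ p q : Fin 2 × Fin 2, (∑ k, starRingEnd ℂ (x k p) * x k q)
      = if p = q then 1 else 0 := by
    intro p q
    have := F3 p.swap q.swap
    simp only [hx, Complex.conj_conj] at this ⊢
    rw [this]
    simp [Prod.swap_inj]
  -- fidelity in the eigenbasis
  have fid2 : ∀ ρ : Matrix (Fin 2 × Fin 2) (Fin 2 × Fin 2) ℂ,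
      fid K ρ = (1/2) * ∑ k, (hJ.eigenvalues k : ℂ) *
        (∑ p, ∑ q, ρ p q * starRingEnd ℂ (x k p) * x k q) := by
    intro ρ
    rw [fid_eq_s19]
    have hT : ∀ p q : Fin 2 × Fin 2, (∑ i, K i p.1 p.2 * starRingEnd ℂ (K i q.1 q.2))
        = ∑ k, (hJ.eigenvalues k : ℂ) * starRingEnd ℂ (x k p) * x k q := by
      intro p q
      have h1 : choi K p.swap q.swap = ∑ i, K i p.1 p.2 * starRingEnd ℂ (K i q.1 q.2) := by
        simpa using choi_apply' K p.swap q.swap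
      rw [← h1, F1]
      refine Finset.sum_congr rfl fun k _ => ?_
      simp [hx]
    simp_rw [hT, Finset.mul_sum]
    refine Eq.trans (Finset.sum_congr rfl fun p _ => Finset.sum_comm) ?_
    refine Eq.trans Finset.sum_comm ?_
    exact Finset.sum_congr rfl fun k _ => Finset.sum_congr rfl fun p _ =>
      Finset.sum_congr rfl fun q _ => by ring
  -- completeness : the quadratic forms sum to the trace
  have sumS : ∀ ρ : Matrix (Fin 2 × Fin 2) (Fin 2 × Fin 2) ℂ,
      (∑ k, ∑ p, ∑ q, ρ p q * starRingEnd ℂ (x k p) * x k q) = ρ.trace := by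
    intro ρ
    have h1 : (∑ k, ∑ p, ∑ q : Fin 2 × Fin 2, ρ p q * starRingEnd ℂ (x k p) * x k q)
        = ∑ p, ∑ q : Fin 2 × Fin 2, ρ p q * ∑ k, starRingEnd ℂ (x k p) * x k q := by
      refine Eq.trans Finset.sum_comm ?_
      refine Finset.sum_congr rfl fun p _ => ?_
      refine Eq.trans Finset.sum_comm ?_
      refine Finset.sum_congr rfl fun q _ => ?_
      rw [Finset.mul_sum]
      exact Finset.sum_congr rfl fun k _ => by ring
    rw [h1]
    simp_rw [G3]
    simp [Matrix.trace, Matrix.diag, mul_ite, Finset.sum_ite_eq]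
  -- upper bound
  have ub : ∀ r ∈ fidSet K, r ≤ lam / 2 := by
    rintro r ⟨ρ, ⟨hpsd, htr⟩, hfid⟩
    have hS : ∀ k, ∃ ck : ℝ, 0 ≤ ck ∧
        (∑ p, ∑ q, ρ p q * starRingEnd ℂ (x k p) * x k q) = (ck : ℂ) := by
      intro k
      have h0 := hpsd.dotProduct_mulVec_nonneg (x k)
      have heq : star (x k) ⬝ᵥ ρ *ᵥ (x k)
          = ∑ p, ∑ q, ρ p q * starRingEnd ℂ (x k p) * x k q := by
        simp only [dotProduct, mulVec, Pi.star_apply, RCLike.star_def, Finset.mul_sum]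
        exact Finset.sum_congr rfl fun p _ => Finset.sum_congr rfl fun q _ => by ring
      rw [heq] at h0
      rw [Complex.le_def] at h0
      refine ⟨(∑ p, ∑ q, ρ p q * starRingEnd ℂ (x k p) * x k q).re, by simpa using h0.1, ?_⟩
      apply Complex.ext
      · simp
      · simpa using h0.2.symm
    choose c hc0 hcS using hS
    have hsum1 : ∑ k, c k = 1 := by
      have h1 : (∑ k, ((c k : ℂ))) = 1 := by
        simp_rw [← hcS]
        rw [sumS ρ, htr]
      exact_mod_cast h1
    have hr : r = (1/2) * ∑ k, hJ.eigenvalues k * c k := by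
      have h2 := hfid
      rw [fid2 ρ] at h2
      simp_rw [hcS] at h2
      have h3 : ((1/2 * ∑ k, hJ.eigenvalues k * c k : ℝ) : ℂ) = (r : ℂ) := by
        push_cast
        rw [← h2]
      exact_mod_cast h3.symm
    have h4 : ∑ k, hJ.eigenvalues k * c k ≤ ∑ k, lam * c k :=
      Finset.sum_le_sum fun k _ => mul_le_mul_of_nonneg_right (hle k) (hc0 k)
    rw [← Finset.mul_sum, hsum1, mul_one] at h4
    rw [hr]; linarith
  -- linear-combination helper
  have lin : ∀ (f g : (Fin 2 × Fin 2) → ℂ) (a b : ℂ),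
      (∑ p, (a * f p + b * g p)) = a * (∑ p, f p) + b * (∑ p, g p) := by
    intro f g a b
    rw [Finset.sum_add_distrib, ← Finset.mul_sum, ← Finset.mul_sum]
  -- the product eigenvector
  obtain ⟨s, t, hst, hq⟩ := quad_root
    (x k1 (0,0) * x k1 (1,1) - x k1 (0,1) * x k1 (1,0))
    (x k1 (0,0) * x k2 (1,1) + x k2 (0,0) * x k1 (1,1)
      - x k1 (0,1) * x k2 (1,0) - x k2 (0,1) * x k1 (1,0))
    (x k2 (0,0) * x k2 (1,1) - x k2 (0,1) * x k2 (1,0))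
  set Y : Fin 2 × Fin 2 → ℂ := fun p => s * x k1 p + t * x k2 p with hY
  have hdetY : Y (0,0) * Y (1,1) = Y (0,1) * Y (1,0) := by
    simp only [hY]
    linear_combination hq
  have hips : (∑ p, starRingEnd ℂ (x k1 p) * Y p) = s := by
    have h1 : (∑ p, starRingEnd ℂ (x k1 p) * Y p)
        = s * (∑ p, starRingEnd ℂ (x k1 p) * x k1 p)
          + t * (∑ p, starRingEnd ℂ (x k1 p) * x k2 p) := by
      rw [← lin]
      exact Finset.sum_congr rfl fun p _ => by simp only [hY]; ring
    rw [h1, G2 k1 k1, G2 k1 k2]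
    simp [hk12]
  have hipt : (∑ p, starRingEnd ℂ (x k2 p) * Y p) = t := by
    have h1 : (∑ p, starRingEnd ℂ (x k2 p) * Y p)
        = s * (∑ p, starRingEnd ℂ (x k2 p) * x k1 p)
          + t * (∑ p, starRingEnd ℂ (x k2 p) * x k2 p) := by
      rw [← lin]
      exact Finset.sum_congr rfl fun p _ => by simp only [hY]; ring
    rw [h1, G2 k2 k1, G2 k2 k2]
    simp [Ne.symm hk12]
  have hYnz : ∃ p, Y p ≠ 0 := by
    by_contra h
    push_neg at h
    refine hst ⟨?_, ?_⟩
    · rw [← hips]; simp [h]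
    · rw [← hipt]; simp [h]
  obtain ⟨u', v', hu'0, hv'0, hYf⟩ := rank1_decomp Y hdetY hYnz
  -- normalization
  have hexu : ∃ a, u' a ≠ 0 := by
    by_contra hh; push_neg at hh; exact hu'0 (funext hh)
  have hexv : ∃ a, v' a ≠ 0 := by
    by_contra hh; push_neg at hh; exact hv'0 (funext hh)
  have hsu : 0 < ∑ a, Complex.normSq (u' a) := by
    obtain ⟨a0, ha0⟩ := hexu
    exact Finset.sum_pos' (fun a _ => Complex.normSq_nonneg _)
      ⟨a0, Finset.mem_univ _, Complex.normSq_pos.mpr ha0⟩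
  have hsv : 0 < ∑ a, Complex.normSq (v' a) := by
    obtain ⟨a0, ha0⟩ := hexv
    exact Finset.sum_pos' (fun a _ => Complex.normSq_nonneg _)
      ⟨a0, Finset.mem_univ _, Complex.normSq_pos.mpr ha0⟩
  set na := Real.sqrt (∑ a, Complex.normSq (u' a)) with hna
  set nb := Real.sqrt (∑ a, Complex.normSq (v' a)) with hnb
  have hna0 : 0 < na := Real.sqrt_pos.mpr hsu
  have hnb0 : 0 < nb := Real.sqrt_pos.mpr hsv
  set u : Fin 2 → ℂ := fun j => ((na⁻¹ : ℝ) : ℂ) * u' j with hu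
  set v : Fin 2 → ℂ := fun j => ((nb⁻¹ : ℝ) : ℂ) * v' j with hv
  have hu1 : (∑ a, Complex.normSq (u a)) = 1 := by
    have h2 : na * na = ∑ a, Complex.normSq (u' a) := Real.mul_self_sqrt hsu.le
    have h3 : (∑ a, Complex.normSq (u a))
        = (na⁻¹ * na⁻¹) * ∑ a, Complex.normSq (u' a) := by
      simp [hu, Complex.normSq_mul, Complex.normSq_ofReal, Finset.mul_sum, mul_assoc]
      ring
    rw [h3, ← h2]
    field_simp
  have hv1 : (∑ a, Complex.normSq (v a)) = 1 := by
    have h2 : nb * nb = ∑ a, Complex.normSq (v' a) := Real.mul_self_sqrt hsv.le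
    have h3 : (∑ a, Complex.normSq (v a))
        = (nb⁻¹ * nb⁻¹) * ∑ a, Complex.normSq (v' a) := by
      simp [hv, Complex.normSq_mul, Complex.normSq_ofReal, Finset.mul_sum, mul_assoc]
      ring
    rw [h3, ← h2]
    field_simp
  set e : ℂ := ((na⁻¹ : ℝ) : ℂ) * ((nb⁻¹ : ℝ) : ℂ) with he
  set xh : Fin 2 × Fin 2 → ℂ := fun q => u q.1 * v q.2 with hxh
  have hxhY : ∀ p, xh p = e * Y p := by
    intro p
    simp only [hxh, hu, hv, he]
    rw [hYf p]
    ring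
  set ρ0 : Matrix (Fin 2 × Fin 2) (Fin 2 × Fin 2) ℂ := Matrix.vecMulVec xh (star xh) with hρ0
  have hρ0app : ∀ p q, ρ0 p q = xh p * starRingEnd ℂ (xh q) := by
    intro p q
    simp [hρ0, Matrix.vecMulVec_apply, Pi.star_apply, Complex.star_def]
  -- density
  have herm : ρ0.IsHermitian := by
    ext p q
    simp only [conjTranspose_apply, hρ0app, _root_.map_mul, Complex.conj_conj, star_apply,
      Complex.star_def, Complex.conj_ofReal]
    ring
  have hpos : ρ0.PosSemidef := by
    refine Matrix.PosSemidef.of_dotProduct_mulVec_nonneg herm fun y => ?_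
    set z : ℂ := ∑ q, starRingEnd ℂ (xh q) * y q with hz
    have hval : star y ⬝ᵥ ρ0 *ᵥ y = starRingEnd ℂ z * z := by
      have hcz : starRingEnd ℂ z = ∑ q, xh q * starRingEnd ℂ (y q) := by
        rw [hz, map_sum]
        exact Finset.sum_congr rfl fun q _ => by
          simp only [_root_.map_mul, Complex.conj_conj]
      rw [hcz, hz, Finset.sum_mul_sum]
      simp only [dotProduct, mulVec, Pi.star_apply, Complex.star_def, Finset.mul_sum]
      refine Finset.sum_congr rfl fun p _ => Finset.sum_congr rfl fun q _ => ?_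
      simp only [hρ0app]
      ring
    rw [hval, mul_comm, Complex.mul_conj]
    exact Complex.zero_le_real.mpr (Complex.normSq_nonneg _)
  have hterm : ∀ p : Fin 2 × Fin 2, xh p * starRingEnd ℂ (xh p)
      = ((Complex.normSq (u p.1) * Complex.normSq (v p.2) : ℝ) : ℂ) := by
    intro p
    rw [Complex.mul_conj]
    simp [hxh, Complex.normSq_mul]
  have htrace : ρ0.trace = 1 := by
    have h1 : ρ0.trace = ∑ p : Fin 2 × Fin 2, xh p * starRingEnd ℂ (xh p) := by
      simp [Matrix.trace, Matrix.diag, hρ0app]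
    rw [h1]
    simp_rw [hterm]
    rw [← Complex.ofReal_sum]
    rw [show (∑ p : Fin 2 × Fin 2, Complex.normSq (u p.1) * Complex.normSq (v p.2))
        = (∑ a, Complex.normSq (u a)) * (∑ b, Complex.normSq (v b)) from by
      rw [Finset.sum_mul_sum, Fintype.sum_prod_type]]
    rw [hu1, hv1]
    norm_num
  -- inner products of eigenvectors with the product vector
  have hip : ∀ k, (∑ p, starRingEnd ℂ (x k p) * xh p)
      = e * (s * (if k = k1 then 1 else 0) + t * (if k = k2 then 1 else 0)) := by
    intro k
    have h1 : (∑ p, starRingEnd ℂ (x k p) * xh p)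
        = (e*s) * (∑ p, starRingEnd ℂ (x k p) * x k1 p)
          + (e*t) * (∑ p, starRingEnd ℂ (x k p) * x k2 p) := by
      rw [← lin]
      refine Finset.sum_congr rfl fun p _ => ?_
      rw [hxhY p]
      simp only [hY]
      ring
    rw [h1, G2 k k1, G2 k k2]
    ring
  have hSk : ∀ k, (∑ p, ∑ q, ρ0 p q * starRingEnd ℂ (x k p) * x k q)
      = (∑ p, starRingEnd ℂ (x k p) * xh p)
        * starRingEnd ℂ (∑ p, starRingEnd ℂ (x k p) * xh p) := by
    intro k
    rw [map_sum, Finset.sum_mul_sum]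
    refine Finset.sum_congr rfl fun p _ => Finset.sum_congr rfl fun q _ => ?_
    simp only [hρ0app, _root_.map_mul, Complex.conj_conj, Complex.conj_ofReal]
    ring
  have hfidval : fid K ρ0 = ((lam / 2 : ℝ) : ℂ) := by
    rw [fid2]
    have hstep : ∀ k ∈ Finset.univ, (hJ.eigenvalues k : ℂ) *
        (∑ p, ∑ q, ρ0 p q * starRingEnd ℂ (x k p) * x k q)
        = (lam : ℂ) * (∑ p, ∑ q, ρ0 p q * starRingEnd ℂ (x k p) * x k q) := by
      intro k _
      by_cases h1 : k = k1
      · rw [h1, hk1]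
      by_cases h2 : k = k2
      · rw [h2, hk2]
      · have hz0 : (∑ p, ∑ q, ρ0 p q * starRingEnd ℂ (x k p) * x k q) = 0 := by
          rw [hSk k, hip k]
          simp [h1, h2]
        rw [hz0, mul_zero, mul_zero]
    rw [Finset.sum_congr rfl hstep, ← Finset.mul_sum, sumS ρ0, htrace]
    push_cast
    ring
  refine ⟨u, v, hu1, hv1, hfidval, ⟨⟨ρ0, ⟨hpos, htrace⟩, hfidval⟩, ub⟩⟩
end
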